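/- arXiv:1408.0483 — 8 statements merged into one kernel-verified Lean document; each statement's English description precedes it below -/
import Mathlib

section
/- The element w = q²·x² + q⁻²·y² + q²·z² − q·x·y·z is central in the algebra B'_q, i.e., w·b = b·w for every b ∈ B'_q. -/
noncomputable section

/-- Generators of the algebra `B'_q`. -/
inductive BGen : Type
  | x | y | z

/-- The defining relations of `B'_q`: `[x,y]_q = (q²-q⁻²)z`, `[z,x]_q = (q²-q⁻²)y`,
`[y,z]_q = (q²-q⁻²)x`, where `[a,b]_q = q·a·b - q⁻¹·b·a`. -/
inductive BRel (q : ℂ) : FreeAlgebra ℂ BGen → FreeAlgebra ℂ BGen → Prop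
  | xy : BRel q
      (q • (FreeAlgebra.ι ℂ BGen.x * FreeAlgebra.ι ℂ BGen.y) -
        q⁻¹ • (FreeAlgebra.ι ℂ BGen.y * FreeAlgebra.ι ℂ BGen.x))
      ((q ^ 2 - q ^ (-2 : ℤ)) • FreeAlgebra.ι ℂ BGen.z)
  | zx : BRel q
      (q • (FreeAlgebra.ι ℂ BGen.z * FreeAlgebra.ι ℂ BGen.x) -
        q⁻¹ • (FreeAlgebra.ι ℂ BGen.x * FreeAlgebra.ι ℂ BGen.z))
      ((q ^ 2 - q ^ (-2 : ℤ)) • FreeAlgebra.ι ℂ BGen.y)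
  | yz : BRel q
      (q • (FreeAlgebra.ι ℂ BGen.y * FreeAlgebra.ι ℂ BGen.z) -
        q⁻¹ • (FreeAlgebra.ι ℂ BGen.z * FreeAlgebra.ι ℂ BGen.y))
      ((q ^ 2 - q ^ (-2 : ℤ)) • FreeAlgebra.ι ℂ BGen.x)

/-- The algebra `B'_q`. -/
abbrev Bq (q : ℂ) : Type := RingQuot (BRel q)

/-- The generator `x` of `B'_q`. -/
def xg (q : ℂ) : Bq q := RingQuot.mkAlgHom ℂ (BRel q) (FreeAlgebra.ι ℂ BGen.x)
/-- The generator `y` of `B'_q`. -/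
def yg (q : ℂ) : Bq q := RingQuot.mkAlgHom ℂ (BRel q) (FreeAlgebra.ι ℂ BGen.y)
/-- The generator `z` of `B'_q`. -/
def zg (q : ℂ) : Bq q := RingQuot.mkAlgHom ℂ (BRel q) (FreeAlgebra.ι ℂ BGen.z)

/-- The element `w = q²x² + q⁻²y² + q²z² - q·x·y·z` of `B'_q`. -/
def wEl (q : ℂ) : Bq q :=
  (q ^ 2) • (xg q * xg q) + (q ^ (-2 : ℤ)) • (yg q * yg q) +
    (q ^ 2) • (zg q * zg q) - q • (xg q * yg q * zg q)

set_option maxHeartbeats 1000000 in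
/-- The element `w = q²x² + q⁻²y² + q²z² - q·x·y·z` is central in `B'_q`. -/
theorem wEl_central (q : ℂ) (hq : q ≠ 0) (b : Bq q) : wEl q * b = b * wEl q := by
  set lam : ℂ := q ^ 2 - q ^ (-2 : ℤ) with hlam
  set X := xg q
  set Y := yg q
  set Z := zg q
  -- the three defining relations in `Bq q`
  have rxy : q • (X * Y) - q⁻¹ • (Y * X) = lam • Z := by
    simpa [X, Y, Z, xg, yg, zg, map_sub, map_smul, map_mul, hlam] using
      RingQuot.mkAlgHom_rel ℂ (BRel.xy (q := q))
  have rzx : q • (Z * X) - q⁻¹ • (X * Z) = lam • Y := by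
    simpa [X, Y, Z, xg, yg, zg, map_sub, map_smul, map_mul, hlam] using
      RingQuot.mkAlgHom_rel ℂ (BRel.zx (q := q))
  have ryz : q • (Y * Z) - q⁻¹ • (Z * Y) = lam • X := by
    simpa [X, Y, Z, xg, yg, zg, map_sub, map_smul, map_mul, hlam] using
      RingQuot.mkAlgHom_rel ℂ (BRel.yz (q := q))
  -- rewrite rules putting words in the normal order x ≤ y ≤ z
  have hyx : Y * X = (q * q) • (X * Y) - (q * lam) • Z := by
    have h2 : q⁻¹ • (Y * X) = q • (X * Y) - lam • Z := by rw [← rxy]; abel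
    calc Y * X = (q * q⁻¹) • (Y * X) := by rw [mul_inv_cancel₀ hq, one_smul]
      _ = q • (q⁻¹ • (Y * X)) := by rw [mul_smul]
      _ = q • (q • (X * Y) - lam • Z) := by rw [h2]
      _ = (q * q) • (X * Y) - (q * lam) • Z := by rw [smul_sub, smul_smul, smul_smul]
  have hzx : Z * X = (q⁻¹ * q⁻¹) • (X * Z) + (q⁻¹ * lam) • Y := by
    have h2 : q • (Z * X) = lam • Y + q⁻¹ • (X * Z) := by rw [← rzx]; abel
    calc Z * X = (q⁻¹ * q) • (Z * X) := by rw [inv_mul_cancel₀ hq, one_smul]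
      _ = q⁻¹ • (q • (Z * X)) := by rw [mul_smul]
      _ = q⁻¹ • (lam • Y + q⁻¹ • (X * Z)) := by rw [h2]
      _ = (q⁻¹ * q⁻¹) • (X * Z) + (q⁻¹ * lam) • Y := by
          rw [smul_add, smul_smul, smul_smul]; abel
  have hzy : Z * Y = (q * q) • (Y * Z) - (q * lam) • X := by
    have h2 : q⁻¹ • (Z * Y) = q • (Y * Z) - lam • X := by rw [← ryz]; abel
    calc Z * Y = (q * q⁻¹) • (Z * Y) := by rw [mul_inv_cancel₀ hq, one_smul]
      _ = q • (q⁻¹ • (Z * Y)) := by rw [mul_smul]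
      _ = q • (q • (Y * Z) - lam • X) := by rw [h2]
      _ = (q * q) • (Y * Z) - (q * lam) • X := by rw [smul_sub, smul_smul, smul_smul]
  -- the same rules inside longer words
  have hyx' : ∀ c : Bq q, Y * (X * c) = (q * q) • (X * (Y * c)) - (q * lam) • (Z * c) := by
    intro c
    rw [← mul_assoc, hyx, sub_mul, smul_mul_assoc, smul_mul_assoc, mul_assoc]
  have hzx' : ∀ c : Bq q, Z * (X * c) = (q⁻¹ * q⁻¹) • (X * (Z * c)) + (q⁻¹ * lam) • (Y * c) := by
    intro c
    rw [← mul_assoc, hzx, add_mul, smul_mul_assoc, smul_mul_assoc, mul_assoc]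
  have hzy' : ∀ c : Bq q, Z * (Y * c) = (q * q) • (Y * (Z * c)) - (q * lam) • (X * c) := by
    intro c
    rw [← mul_assoc, hzy, sub_mul, smul_mul_assoc, smul_mul_assoc, mul_assoc]
  have hlam' : lam = q ^ 2 - (q ^ 2)⁻¹ := by
    rw [hlam, zpow_neg, zpow_ofNat]
  -- centrality on the generators
  have commx : wEl q * X = X * wEl q := by
    show ((q ^ 2) • (X * X) + (q ^ (-2 : ℤ)) • (Y * Y) + (q ^ 2) • (Z * Z)
        - q • (X * Y * Z)) * X
      = X * ((q ^ 2) • (X * X) + (q ^ (-2 : ℤ)) • (Y * Y) + (q ^ 2) • (Z * Z)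
        - q • (X * Y * Z))
    simp only [zpow_neg, zpow_ofNat, sub_mul, add_mul, mul_sub, mul_add,
      smul_mul_assoc, mul_smul_comm, mul_assoc, hyx, hyx', hzx, hzx', hzy, hzy',
      smul_sub, smul_add, smul_smul]
    match_scalars
    all_goals (try rw [hlam'])
    all_goals (try simp only [zpow_natCast, zpow_ofNat, zpow_neg])
    all_goals (try ring)
    all_goals (try (field_simp; ring))
    all_goals field_simp
  have commy : wEl q * Y = Y * wEl q := by
    show ((q ^ 2) • (X * X) + (q ^ (-2 : ℤ)) • (Y * Y) + (q ^ 2) • (Z * Z)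
        - q • (X * Y * Z)) * Y
      = Y * ((q ^ 2) • (X * X) + (q ^ (-2 : ℤ)) • (Y * Y) + (q ^ 2) • (Z * Z)
        - q • (X * Y * Z))
    simp only [zpow_neg, zpow_ofNat, sub_mul, add_mul, mul_sub, mul_add,
      smul_mul_assoc, mul_smul_comm, mul_assoc, hyx, hyx', hzx, hzx', hzy, hzy',
      smul_sub, smul_add, smul_smul]
    match_scalars
    all_goals (try rw [hlam'])
    all_goals (try simp only [zpow_natCast, zpow_ofNat, zpow_neg])
    all_goals (try ring)
    all_goals (try (field_simp; ring))
    all_goals (field_simp; ring_nf)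
  have commz : wEl q * Z = Z * wEl q := by
    show ((q ^ 2) • (X * X) + (q ^ (-2 : ℤ)) • (Y * Y) + (q ^ 2) • (Z * Z)
        - q • (X * Y * Z)) * Z
      = Z * ((q ^ 2) • (X * X) + (q ^ (-2 : ℤ)) • (Y * Y) + (q ^ 2) • (Z * Z)
        - q • (X * Y * Z))
    simp only [zpow_neg, zpow_ofNat, sub_mul, add_mul, mul_sub, mul_add,
      smul_mul_assoc, mul_smul_comm, mul_assoc, hyx, hyx', hzx, hzx', hzy, hzy',
      smul_sub, smul_add, smul_smul]
    match_scalars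
    all_goals (try rw [hlam'])
    all_goals (try simp only [zpow_natCast, zpow_ofNat, zpow_neg])
    all_goals (try ring)
    all_goals (try (field_simp; ring))
    all_goals field_simp
  -- induction over the algebra
  obtain ⟨a, rfl⟩ := RingQuot.mkAlgHom_surjective ℂ (BRel q) b
  induction a using FreeAlgebra.induction with
  | grade0 r =>
      rw [AlgHom.commutes]
      exact (Algebra.commutes r (wEl q)).symm
  | grade1 i =>
      cases i
      · exact commx
      · exact commy
      · exact commz
  | mul a₁ a₂ h₁ h₂ =>
      rw [map_mul, ← mul_assoc, h₁, mul_assoc, h₂, mul_assoc]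
  | add a₁ a₂ h₁ h₂ =>
      rw [map_add, mul_add, add_mul, h₁, h₂]
end
end

section
/- In H_{q,t} (with t² ≠ −1), the idempotent e commutes with each of the three elements X + X⁻¹, Y + Y⁻¹, and X·Y·T⁻² + X⁻¹·Y⁻¹; consequently (X + X⁻¹)·e, (Y + Y⁻¹)·e, and (X·Y·T⁻² + X⁻¹·Y⁻¹)·e all lie in the spherical subalgebra SH_{q,t} = e·H_{q,t}·e. -/
noncomputable section

/-- Generators of the double affine Hecke algebra of type `A₁`. -/
inductive DGen : Type
  | X | Xi | Y | Yi | T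

/-- The defining relations of the double affine Hecke algebra `H_{q,t}` of type `A₁`. -/
inductive DahaRel (q t : ℂ) : FreeAlgebra ℂ DGen → FreeAlgebra ℂ DGen → Prop
  | XXi : DahaRel q t (FreeAlgebra.ι ℂ DGen.X * FreeAlgebra.ι ℂ DGen.Xi) 1
  | XiX : DahaRel q t (FreeAlgebra.ι ℂ DGen.Xi * FreeAlgebra.ι ℂ DGen.X) 1
  | YYi : DahaRel q t (FreeAlgebra.ι ℂ DGen.Y * FreeAlgebra.ι ℂ DGen.Yi) 1
  | YiY : DahaRel q t (FreeAlgebra.ι ℂ DGen.Yi * FreeAlgebra.ι ℂ DGen.Y) 1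
  | TXT : DahaRel q t
      (FreeAlgebra.ι ℂ DGen.T * FreeAlgebra.ι ℂ DGen.X * FreeAlgebra.ι ℂ DGen.T)
      (FreeAlgebra.ι ℂ DGen.Xi)
  | TYiT : DahaRel q t
      (FreeAlgebra.ι ℂ DGen.T * FreeAlgebra.ι ℂ DGen.Yi * FreeAlgebra.ι ℂ DGen.T)
      (FreeAlgebra.ι ℂ DGen.Y)
  | XY : DahaRel q t (FreeAlgebra.ι ℂ DGen.X * FreeAlgebra.ι ℂ DGen.Y)
      ((q ^ 2) • (FreeAlgebra.ι ℂ DGen.Y * FreeAlgebra.ι ℂ DGen.X *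
        FreeAlgebra.ι ℂ DGen.T * FreeAlgebra.ι ℂ DGen.T))
  | hecke : DahaRel q t
      ((FreeAlgebra.ι ℂ DGen.T - algebraMap ℂ (FreeAlgebra ℂ DGen) t) *
        (FreeAlgebra.ι ℂ DGen.T + algebraMap ℂ (FreeAlgebra ℂ DGen) t⁻¹)) 0

/-- The double affine Hecke algebra `H_{q,t}` of type `A₁`. -/
abbrev DAHA (q t : ℂ) : Type := RingQuot (DahaRel q t)

/-- The generator `X` of `H_{q,t}`. -/
def Xg (q t : ℂ) : DAHA q t := RingQuot.mkAlgHom ℂ (DahaRel q t) (FreeAlgebra.ι ℂ DGen.X)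
/-- The generator `X⁻¹` of `H_{q,t}`. -/
def Xig (q t : ℂ) : DAHA q t := RingQuot.mkAlgHom ℂ (DahaRel q t) (FreeAlgebra.ι ℂ DGen.Xi)
/-- The generator `Y` of `H_{q,t}`. -/
def Yg (q t : ℂ) : DAHA q t := RingQuot.mkAlgHom ℂ (DahaRel q t) (FreeAlgebra.ι ℂ DGen.Y)
/-- The generator `Y⁻¹` of `H_{q,t}`. -/
def Yig (q t : ℂ) : DAHA q t := RingQuot.mkAlgHom ℂ (DahaRel q t) (FreeAlgebra.ι ℂ DGen.Yi)
/-- The generator `T` of `H_{q,t}`. -/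
def Tg (q t : ℂ) : DAHA q t := RingQuot.mkAlgHom ℂ (DahaRel q t) (FreeAlgebra.ι ℂ DGen.T)
/-- The idempotent `e = (T + t⁻¹)/(t + t⁻¹)` of `H_{q,t}`. -/
def idem (q t : ℂ) : DAHA q t :=
  (t + t⁻¹)⁻¹ • (Tg q t + algebraMap ℂ (DAHA q t) t⁻¹)

/-- The element `T⁻¹ = T + t⁻¹ - t` of `H_{q,t}`. -/
def Tinv (q t : ℂ) : DAHA q t :=
  Tg q t + algebraMap ℂ (DAHA q t) t⁻¹ - algebraMap ℂ (DAHA q t) t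

namespace DahaAux

variable (q t : ℂ)

local notation "C" => algebraMap ℂ (DAHA q t)

lemma hTXT : Tg q t * Xg q t * Tg q t = Xig q t := by
  simpa [Tg, Xg, Xig, map_mul] using RingQuot.mkAlgHom_rel ℂ (DahaRel.TXT (q := q) (t := t))

lemma hTYiT : Tg q t * Yig q t * Tg q t = Yg q t := by
  simpa [Tg, Yg, Yig, map_mul] using RingQuot.mkAlgHom_rel ℂ (DahaRel.TYiT (q := q) (t := t))

lemma hHecke : (Tg q t - C t) * (Tg q t + C t⁻¹) = 0 := by
  simpa [Tg, map_mul, map_sub, map_add, map_zero] using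
    RingQuot.mkAlgHom_rel ℂ (DahaRel.hecke (q := q) (t := t))

lemma hT2 (ht : t ≠ 0) : Tg q t * Tg q t = C (t - t⁻¹) * Tg q t + 1 := by
  have e1 : Tg q t * C t⁻¹ = C t⁻¹ * Tg q t := (Algebra.commutes _ _).symm
  have e2 : C t * C t⁻¹ = 1 := by rw [← map_mul, mul_inv_cancel₀ ht, map_one]
  have expand : (Tg q t - C t) * (Tg q t + C t⁻¹)
      = Tg q t * Tg q t - (C (t - t⁻¹) * Tg q t + 1) := by
    rw [map_sub, sub_mul, sub_mul, mul_add, mul_add, e1, e2]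
    abel
  have h := hHecke q t
  rw [expand, sub_eq_zero] at h
  exact h

lemma hTTi (ht : t ≠ 0) : Tg q t * Tinv q t = 1 := by
  have e1 : Tg q t * C t⁻¹ = C t⁻¹ * Tg q t := (Algebra.commutes _ _).symm
  have e3 : Tg q t * C t = C t * Tg q t := (Algebra.commutes _ _).symm
  rw [Tinv, mul_sub, mul_add, hT2 q t ht, map_sub, sub_mul, e1, e3]
  abel

lemma hTiT (ht : t ≠ 0) : Tinv q t * Tg q t = 1 := by
  rw [Tinv, sub_mul, add_mul, hT2 q t ht, map_sub, sub_mul]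
  abel

lemma hTX (ht : t ≠ 0) : Tg q t * Xg q t = Xig q t * Tinv q t := by
  calc Tg q t * Xg q t = Tg q t * Xg q t * (Tg q t * Tinv q t) := by
        rw [hTTi q t ht, mul_one]
    _ = (Tg q t * Xg q t * Tg q t) * Tinv q t := by noncomm_ring
    _ = Xig q t * Tinv q t := by rw [hTXT]

lemma hTXi (ht : t ≠ 0) :
    Tg q t * Xig q t = Xg q t * Tg q t + C (t - t⁻¹) * Xig q t := by
  calc Tg q t * Xig q t = Tg q t * (Tg q t * Xg q t * Tg q t) := by rw [hTXT]
    _ = (Tg q t * Tg q t) * Xg q t * Tg q t := by noncomm_ring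
    _ = (C (t - t⁻¹) * Tg q t + 1) * Xg q t * Tg q t := by rw [hT2 q t ht]
    _ = C (t - t⁻¹) * (Tg q t * Xg q t * Tg q t) + Xg q t * Tg q t := by noncomm_ring
    _ = Xg q t * Tg q t + C (t - t⁻¹) * Xig q t := by rw [hTXT]; abel

lemma hTYi (ht : t ≠ 0) : Tg q t * Yig q t = Yg q t * Tinv q t := by
  calc Tg q t * Yig q t = Tg q t * Yig q t * (Tg q t * Tinv q t) := by
        rw [hTTi q t ht, mul_one]
    _ = (Tg q t * Yig q t * Tg q t) * Tinv q t := by noncomm_ring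
    _ = Yg q t * Tinv q t := by rw [hTYiT]

lemma hTY (ht : t ≠ 0) :
    Tg q t * Yg q t = Yig q t * Tg q t + C (t - t⁻¹) * Yg q t := by
  calc Tg q t * Yg q t = Tg q t * (Tg q t * Yig q t * Tg q t) := by rw [hTYiT]
    _ = (Tg q t * Tg q t) * Yig q t * Tg q t := by noncomm_ring
    _ = (C (t - t⁻¹) * Tg q t + 1) * Yig q t * Tg q t := by rw [hT2 q t ht]
    _ = C (t - t⁻¹) * (Tg q t * Yig q t * Tg q t) + Yig q t * Tg q t := by noncomm_ring
    _ = Yig q t * Tg q t + C (t - t⁻¹) * Yg q t := by rw [hTYiT]; abel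

lemma hTiY (ht : t ≠ 0) : Tinv q t * Yg q t = Yig q t * Tg q t := by
  calc Tinv q t * Yg q t = Tinv q t * (Tg q t * Yig q t * Tg q t) := by rw [hTYiT]
    _ = (Tinv q t * Tg q t) * (Yig q t * Tg q t) := by noncomm_ring
    _ = Yig q t * Tg q t := by rw [hTiT q t ht, one_mul]

lemma hTinv_eq : Tinv q t = Tg q t - C (t - t⁻¹) := by
  rw [Tinv, map_sub]; abel

lemma hcomm1 (ht : t ≠ 0) :
    Tg q t * (Xg q t + Xig q t) = (Xg q t + Xig q t) * Tg q t := by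
  rw [mul_add, add_mul, hTX q t ht, hTXi q t ht, hTinv_eq, mul_sub,
    ← Algebra.commutes (t - t⁻¹) (Xig q t)]
  abel

lemma hcomm2 (ht : t ≠ 0) :
    Tg q t * (Yg q t + Yig q t) = (Yg q t + Yig q t) * Tg q t := by
  rw [mul_add, add_mul, hTY q t ht, hTYi q t ht, hTinv_eq, mul_sub,
    ← Algebra.commutes (t - t⁻¹) (Yg q t)]
  abel

lemma hcomm3 (ht : t ≠ 0) :
    Tg q t * (Xg q t * Yg q t * (Tinv q t * Tinv q t) + Xig q t * Yig q t) =
      (Xg q t * Yg q t * (Tinv q t * Tinv q t) + Xig q t * Yig q t) * Tg q t := by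
  have h1 : Tg q t * (Xg q t * Yg q t * (Tinv q t * Tinv q t))
      = Xig q t * Yig q t * Tinv q t := by
    calc Tg q t * (Xg q t * Yg q t * (Tinv q t * Tinv q t))
        = (Tg q t * Xg q t) * Yg q t * Tinv q t * Tinv q t := by noncomm_ring
      _ = (Xig q t * Tinv q t) * Yg q t * Tinv q t * Tinv q t := by rw [hTX q t ht]
      _ = Xig q t * (Tinv q t * Yg q t) * Tinv q t * Tinv q t := by noncomm_ring
      _ = Xig q t * (Yig q t * Tg q t) * Tinv q t * Tinv q t := by rw [hTiY q t ht]
      _ = Xig q t * Yig q t * (Tg q t * Tinv q t) * Tinv q t := by noncomm_ring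
      _ = Xig q t * Yig q t * Tinv q t := by rw [hTTi q t ht, mul_one]
  have h2 : Tg q t * (Xig q t * Yig q t)
      = Xg q t * Yg q t * Tinv q t + C (t - t⁻¹) * (Xig q t * Yig q t) := by
    calc Tg q t * (Xig q t * Yig q t) = (Tg q t * Xig q t) * Yig q t := by noncomm_ring
      _ = (Xg q t * Tg q t + C (t - t⁻¹) * Xig q t) * Yig q t := by rw [hTXi q t ht]
      _ = Xg q t * (Tg q t * Yig q t) + C (t - t⁻¹) * (Xig q t * Yig q t) := by noncomm_ring
      _ = Xg q t * (Yg q t * Tinv q t) + C (t - t⁻¹) * (Xig q t * Yig q t) := by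
          rw [hTYi q t ht]
      _ = Xg q t * Yg q t * Tinv q t + C (t - t⁻¹) * (Xig q t * Yig q t) := by noncomm_ring
  have h3 : Xg q t * Yg q t * (Tinv q t * Tinv q t) * Tg q t
      = Xg q t * Yg q t * Tinv q t := by
    calc Xg q t * Yg q t * (Tinv q t * Tinv q t) * Tg q t
        = Xg q t * Yg q t * Tinv q t * (Tinv q t * Tg q t) := by noncomm_ring
      _ = Xg q t * Yg q t * Tinv q t := by rw [hTiT q t ht, mul_one]
  have h4 : Xig q t * Yig q t * Tinv q t + C (t - t⁻¹) * (Xig q t * Yig q t)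
      = Xig q t * Yig q t * Tg q t := by
    rw [hTinv_eq, mul_sub, ← Algebra.commutes (t - t⁻¹) (Xig q t * Yig q t)]
    abel
  rw [mul_add, add_mul, h1, h2, h3, ← h4]
  abel

lemma idem_comm_of {Z : DAHA q t} (h : Tg q t * Z = Z * Tg q t) :
    idem q t * Z = Z * idem q t := by
  rw [idem, smul_mul_assoc, mul_smul_comm, add_mul, mul_add, h,
    Algebra.commutes t⁻¹ Z]

lemma idem_sq (ht : t ≠ 0) (ht2 : t ^ 2 ≠ -1) : idem q t * idem q t = idem q t := by
  have hs : t + t⁻¹ ≠ 0 := by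
    intro h
    apply ht2
    have := congrArg (· * t) h
    field_simp at this
    linear_combination this
  have e1 : Tg q t * C t⁻¹ = C t⁻¹ * Tg q t := (Algebra.commutes _ _).symm
  have key : (Tg q t + C t⁻¹) * (Tg q t + C t⁻¹)
      = C (t + t⁻¹) * (Tg q t + C t⁻¹) := by
    have c2 : C t * C t⁻¹ = 1 := by rw [← map_mul, mul_inv_cancel₀ ht, map_one]
    simp only [map_add, add_mul, mul_add]
    rw [hT2 q t ht, e1, map_sub, sub_mul, c2]
    abel
  have hscal : (t + t⁻¹)⁻¹ * (t + t⁻¹)⁻¹ * (t + t⁻¹) = (t + t⁻¹)⁻¹ := by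
    rw [mul_assoc, inv_mul_cancel₀ hs, mul_one]
  rw [idem, smul_mul_assoc, mul_smul_comm, key, smul_smul, Algebra.smul_def,
    ← mul_assoc, ← map_mul, hscal, ← Algebra.smul_def]

end DahaAux

/-- The idempotent `e` commutes with `X + X⁻¹`, `Y + Y⁻¹` and `X·Y·T⁻² + X⁻¹·Y⁻¹`, and
consequently `(X + X⁻¹)e`, `(Y + Y⁻¹)e`, `(X·Y·T⁻² + X⁻¹·Y⁻¹)e` lie in the spherical
subalgebra `SH_{q,t} = e·H_{q,t}·e`. -/
theorem idem_commutes (q t : ℂ) (hq : q ≠ 0) (ht : t ≠ 0) (ht2 : t ^ 2 ≠ -1) :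
    (idem q t * (Xg q t + Xig q t) = (Xg q t + Xig q t) * idem q t) ∧
    (idem q t * (Yg q t + Yig q t) = (Yg q t + Yig q t) * idem q t) ∧
    (idem q t * (Xg q t * Yg q t * (Tinv q t * Tinv q t) + Xig q t * Yig q t) =
      (Xg q t * Yg q t * (Tinv q t * Tinv q t) + Xig q t * Yig q t) * idem q t) ∧
    (∃ h : DAHA q t, (Xg q t + Xig q t) * idem q t = idem q t * h * idem q t) ∧
    (∃ h : DAHA q t, (Yg q t + Yig q t) * idem q t = idem q t * h * idem q t) ∧
    (∃ h : DAHA q t,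
      (Xg q t * Yg q t * (Tinv q t * Tinv q t) + Xig q t * Yig q t) * idem q t =
        idem q t * h * idem q t) := by
  have hc1 := DahaAux.idem_comm_of q t (DahaAux.hcomm1 q t ht)
  have hc2 := DahaAux.idem_comm_of q t (DahaAux.hcomm2 q t ht)
  have hc3 := DahaAux.idem_comm_of q t (DahaAux.hcomm3 q t ht)
  have he := DahaAux.idem_sq q t ht ht2
  refine ⟨hc1, hc2, hc3, ⟨Xg q t + Xig q t, ?_⟩, ⟨Yg q t + Yig q t, ?_⟩,
    ⟨Xg q t * Yg q t * (Tinv q t * Tinv q t) + Xig q t * Yig q t, ?_⟩⟩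
  · rw [hc1, mul_assoc, he]
  · rw [hc2, mul_assoc, he]
  · rw [hc3, mul_assoc _ (idem q t) (idem q t), he]
end
end

section
/- The operators x̂, T̂, Ŷ on ℂ[X^{±1}] are invertible and satisfy the defining relations of H_{q,t}: T̂∘x̂∘T̂ = x̂⁻¹, T̂∘Ŷ⁻¹∘T̂ = Ŷ, x̂∘Ŷ = q²·Ŷ∘x̂∘T̂², and (T̂ − t)∘(T̂ + t⁻¹) = 0. Consequently there is a unique ℂ-algebra homomorphism π : H_{q,t} → End_ℂ(ℂ[X^{±1}]) with π(X) = x̂, π(T) = T̂, π(Y) = Ŷ (the polynomial representation of H_{q,t}). -/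
noncomputable section

open LaurentPolynomial in
/-- The operators `x̂`, `T̂`, `Ŷ = ŷ ∘ ŝ ∘ T̂` on `ℂ[X^{±1}]` are invertible and satisfy the
defining relations of `H_{q,t}`; consequently there is a unique algebra homomorphism
`π : H_{q,t} → End_ℂ(ℂ[X^{±1}])` with `π X = x̂`, `π T = T̂`, `π Y = Ŷ` (the polynomial
representation).  Here `x̂` is multiplication by `X`, `ŝ` is `f(X) ↦ f(X⁻¹)`,
`ŷ` is `f(X) ↦ f(q⁻²X)`, and `T̂` is the Demazure–Lusztig operator, characterized by
`(X²-1)·T̂f = t·(X²-1)·ŝf + (t-t⁻¹)·(ŝf - f)`. -/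
theorem polynomial_representation (q t : ℂ) (hq : q ≠ 0) (ht : t ≠ 0)
    (xh sh yh Th : Module.End ℂ (LaurentPolynomial ℂ))
    (hx : ∀ f, xh f = T 1 * f)
    (hs : ∀ n : ℤ, sh (T n) = T (-n))
    (hy : ∀ n : ℤ, yh (T n) = q ^ (-2 * n) • T n)
    (hT : ∀ f, (T 2 - 1) * Th f = t • ((T 2 - 1) * sh f) + (t - t⁻¹) • (sh f - f)) :
    (IsUnit xh ∧ IsUnit Th ∧ IsUnit (yh * sh * Th)) ∧
    (Th * xh * Th) * xh = 1 ∧ xh * (Th * xh * Th) = 1 ∧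
    (∃ Yinv : Module.End ℂ (LaurentPolynomial ℂ),
      (yh * sh * Th) * Yinv = 1 ∧ Yinv * (yh * sh * Th) = 1 ∧
      Th * Yinv * Th = yh * sh * Th) ∧
    xh * (yh * sh * Th) = (q ^ 2) • ((yh * sh * Th) * xh * Th * Th) ∧
    (Th - t • 1) * (Th + t⁻¹ • 1) = 0 ∧
    ∃! π : DAHA q t →ₐ[ℂ] Module.End ℂ (LaurentPolynomial ℂ),
      π (Xg q t) = xh ∧ π (Tg q t) = Th ∧ π (Yg q t) = yh * sh * Th := by
  -- cancellation
  have hu : (T 2 - 1 : LaurentPolynomial ℂ) ≠ 0 := by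
    intro h
    rw [sub_eq_zero] at h
    have h2 : (T 2 : LaurentPolynomial ℂ) = T 0 := h.trans T_zero.symm
    have h3 : (AddMonoidAlgebra.single (2:ℤ) (1:ℂ)) = AddMonoidAlgebra.single (0:ℤ) (1:ℂ):= h2
    rw [AddMonoidAlgebra.single_inj] at h3
    simp at h3
  have cancel : ∀ {a b : LaurentPolynomial ℂ},
      (T 2 - 1) * a = (T 2 - 1) * b → a = b := fun h => mul_left_cancel₀ hu h
  -- extensionality on the basis
  have extT : ∀ φ ψ : Module.End ℂ (LaurentPolynomial ℂ),
      (∀ n : ℤ, φ (T n) = ψ (T n)) → φ = ψ := by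
    intro φ ψ h
    apply AddMonoidAlgebra.lhom_ext'
    intro n
    apply LinearMap.ext_ring
    simpa [AddMonoidAlgebra.lsingle_apply] using h n
  -- s is an involution
  have hss_op : sh * sh = 1 := by
    apply extT
    intro n
    simp [Module.End.mul_apply, hs]
  have hss : ∀ f, sh (sh f) = f := fun f => by
    simpa [Module.End.mul_apply] using LinearMap.ext_iff.mp hss_op f
  -- s conjugates multiplication by T m
  have hsT : ∀ (m : ℤ) (f : LaurentPolynomial ℂ), sh (T m * f) = T (-m) * sh f := by
    intro m f
    have h : sh * LinearMap.mulLeft ℂ (T m) = LinearMap.mulLeft ℂ (T (-m)) * sh := by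
      apply extT
      intro n
      rw [Module.End.mul_apply, LinearMap.mulLeft_apply, Module.End.mul_apply,
        LinearMap.mulLeft_apply, ← T_add, hs, hs, ← T_add, neg_add]
    simpa [Module.End.mul_apply, LinearMap.mulLeft_apply] using LinearMap.ext_iff.mp h f
  -- basic identities
  have hm2 : (T 2 : LaurentPolynomial ℂ) = T 1 * T 1 := by rw [← T_add]; norm_num
  have hvv' : (T 1 : LaurentPolynomial ℂ) * T (-1) = 1 := by rw [← T_add]; norm_num
  set τ := algebraMap ℂ (LaurentPolynomial ℂ) t with hτ
  set τ' := algebraMap ℂ (LaurentPolynomial ℂ) t⁻¹ with hτ'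
  have hττ' : τ * τ' = 1 := by rw [← map_mul, mul_inv_cancel₀ ht, map_one]
  have hmm' : (T 2 : LaurentPolynomial ℂ) * T (-2) = 1 := by rw [← T_add]; norm_num
  -- s-conjugate of the defining relation of Th
  have hshT : ∀ f, (T (-2) - 1) * sh (Th f)
      = t • ((T (-2) - 1) * f) + (t - t⁻¹) • (f - sh f) := by
    intro f
    have h0 : T 2 * Th f - Th f
        = t • (T 2 * sh f - sh f) + (t - t⁻¹) • (sh f - f) := by
      have := hT f
      rwa [sub_mul, one_mul, sub_mul, one_mul] at this
    have h := congrArg (⇑sh) h0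
    simp only [map_add, map_smul, map_sub, hsT, hss] at h
    rw [sub_mul, one_mul, sub_mul, one_mul]
    exact h
  -- the relations in multiplicative form
  have hsd : ∀ (a : ℂ) (z : LaurentPolynomial ℂ),
      a • z = algebraMap ℂ (LaurentPolynomial ℂ) a * z := fun a z => Algebra.smul_def a z
  have hTm : ∀ f, (T 2 - 1) * Th f
      = τ * ((T 2 - 1) * sh f) + (τ - τ') * (sh f - f) := by
    intro f
    rw [hT f, hsd, hsd, map_sub]
  have hshTm : ∀ f, (T (-2) - 1) * sh (Th f)
      = τ * ((T (-2) - 1) * f) + (τ - τ') * (f - sh f) := by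
    intro f
    rw [hshT f, hsd, hsd, map_sub]
  -- key derived identity
  have hS2 : ∀ f, (T 2 - 1) * sh (Th f)
      = τ * ((T 2 - 1) * f) - (τ - τ') * (T 2 * (f - sh f)) := by
    intro f
    linear_combination (-(T 2)) * hshTm f + (sh (Th f) - τ * f) * hmm'
  -- the Hecke relation, pointwise
  have hecke_pt : ∀ f, Th (Th f) = (t - t⁻¹) • Th f + f := by
    intro f
    have goal' : (T 2 - 1) * ((T 2 - 1) * Th (Th f))
        = (T 2 - 1) * ((T 2 - 1) * ((τ - τ') * Th f + f)) := by
      linear_combination (T 2 - 1) * hTm (Th f) + (τ * (T 2 - 1) + (τ - τ')) * hS2 f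
        - (τ - τ') * T 2 * hTm f + (f - 2 * T 2 * f + T 2 * T 2 * f) * hττ'
    have h := cancel (cancel goal')
    rw [hsd, map_sub]
    exact h
  -- the relation T x T x = 1, pointwise
  have txt_pt : ∀ f, Th (T 1 * Th (T 1 * f)) = f := by
    intro f
    have k1 := hTm (T 1 * f)
    rw [hsT] at k1
    have k2 := hTm (T 1 * Th (T 1 * f))
    rw [hsT] at k2
    have k3 := hS2 (T 1 * f)
    rw [hsT] at k3
    have goal' : (T 2 - 1) * ((T 2 - 1) * Th (T 1 * Th (T 1 * f)))
        = (T 2 - 1) * ((T 2 - 1) * f) := by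
      rw [hm2] at k1 k2 k3 ⊢
      linear_combination (T 1 * T 1 - 1) * k2
        + T (-1) * (τ * (T 1 * T 1 - 1) + (τ - τ')) * k3
        - (τ - τ') * T 1 * k1
        + (- τ * τ * T 1 * T 1 * f + τ * τ' * f + τ * τ' * T 1 * T 1 * T 1 * T 1 * f
           - τ' * τ' * T 1 * T 1 * f + τ * τ * T 1 * T 1 * T 1 * T (-1) * sh f
           - τ * τ' * T 1 * T 1 * T 1 * T (-1) * sh f - τ * τ' * T 1 * T (-1) * sh f
           + τ' * τ' * T 1 * T (-1) * sh f) * hvv'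
        + (f - 2 * (T 1 * T 1) * f + T 1 * T 1 * T 1 * T 1 * f) * hττ'
    exact cancel (cancel goal')
  -- inverse of x
  set xhi : Module.End ℂ (LaurentPolynomial ℂ) := LinearMap.mulLeft ℂ (T (-1)) with hxhi
  have hxE : ∀ f, xhi f = T (-1) * f := fun f => rfl
  have hxxhi : xh * xhi = 1 := by
    apply LinearMap.ext
    intro f
    rw [Module.End.mul_apply, hx, hxE, Module.End.one_apply, ← mul_assoc, hvv', one_mul]
  have hxhix : xhi * xh = 1 := by
    apply LinearMap.ext
    intro f
    rw [Module.End.mul_apply, hxE, hx, Module.End.one_apply, ← mul_assoc, ← T_add]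
    norm_num
  -- inverse of Th
  set Thi : Module.End ℂ (LaurentPolynomial ℂ) := Th - (t - t⁻¹) • 1 with hThi
  have hThThi : Th * Thi = 1 := by
    apply LinearMap.ext
    intro f
    simp only [Module.End.mul_apply, hThi, LinearMap.sub_apply, LinearMap.smul_apply,
      Module.End.one_apply, map_sub, map_smul, hecke_pt]
    abel
  have hThiTh : Thi * Th = 1 := by
    apply LinearMap.ext
    intro f
    simp only [Module.End.mul_apply, hThi, LinearMap.sub_apply, LinearMap.smul_apply,
      Module.End.one_apply, hecke_pt]
    abel
  -- inverse of yh
  have hq2 : ∀ a b : ℤ, q ^ a * q ^ b = q ^ (a + b) := fun a b => (zpow_add₀ hq a b).symm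
  set F : Multiplicative ℤ →* LaurentPolynomial ℂ :=
    { toFun := fun x => q ^ (2 * x.toAdd) • T x.toAdd
      map_one' := by simp
      map_mul' := by
        intro a b
        show q ^ (2 * (a.toAdd + b.toAdd)) • T (a.toAdd + b.toAdd) = _
        rw [smul_mul_smul_comm, ← T_add, hq2]
        ring_nf } with hF
  set yhi : Module.End ℂ (LaurentPolynomial ℂ) :=
    ((AddMonoidAlgebra.lift ℂ (LaurentPolynomial ℂ) ℤ) F).toLinearMap with hyhi
  have hyi : ∀ n : ℤ, yhi (T n) = q ^ (2 * n) • T n := by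
    intro n
    have h := AddMonoidAlgebra.lift_single F n (1 : ℂ)
    rw [one_smul] at h
    exact h
  have hyyhi : yh * yhi = 1 := by
    apply extT
    intro n
    rw [Module.End.mul_apply, hyi n, map_smul, hy n, smul_smul, hq2, Module.End.one_apply]
    norm_num
  have hyhiy : yhi * yh = 1 := by
    apply extT
    intro n
    rw [Module.End.mul_apply, hy n, map_smul, hyi n, smul_smul, hq2, Module.End.one_apply]
    norm_num
  have hsyhi : sh * yhi = yh * sh := by
    apply extT
    intro n
    rw [Module.End.mul_apply, Module.End.mul_apply, hyi n, map_smul, hs, hy]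
    congr 1
    ring
  -- helper for associativity juggling
  have hc3 : ∀ a b z : Module.End ℂ (LaurentPolynomial ℂ), a * b = 1 → a * (b * z) = z := by
    intro a b z h
    rw [← mul_assoc, h, one_mul]
  -- the inverse of Y
  set Yi : Module.End ℂ (LaurentPolynomial ℂ) := Thi * sh * yhi with hYi
  have hYYi : (yh * sh * Th) * Yi = 1 := by
    rw [hYi]
    simp only [mul_assoc]
    rw [hc3 _ _ _ hThThi, hc3 _ _ _ hss_op, hyyhi]
  have hYiY : Yi * (yh * sh * Th) = 1 := by
    rw [hYi]
    simp only [mul_assoc]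
    rw [hc3 _ _ _ hyhiy, hc3 _ _ _ hss_op, hThiTh]
  -- the TXT relation
  have hTXTX : (Th * xh * Th) * xh = 1 := by
    apply LinearMap.ext
    intro f
    simp only [Module.End.mul_apply, Module.End.one_apply, hx]
    exact txt_pt f
  have hTXT_eq : Th * xh * Th = xhi := by
    have h1 : Th * xh * Th = (Th * xh * Th) * (xh * xhi) := by rw [hxxhi, mul_one]
    rw [h1, ← mul_assoc, hTXTX, one_mul]
  have hXTXT : xh * (Th * xh * Th) = 1 := by rw [hTXT_eq, hxxhi]
  -- the TY⁻¹T relation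
  have hTYiT : Th * Yi * Th = yh * sh * Th := by
    rw [hYi]
    simp only [mul_assoc]
    rw [hc3 _ _ _ hThThi, ← mul_assoc sh yhi Th, hsyhi, mul_assoc]
  -- the XY relation
  have hqq : (q ^ 2 : ℂ) = q ^ (2 : ℤ) := by
    exact_mod_cast (zpow_natCast q 2).symm
  have hq2op : xh * (yh * sh) = (q ^ 2 : ℂ) • ((yh * sh) * xhi) := by
    apply extT
    intro n
    have L : (xh * (yh * sh)) (T n) = q ^ (-2 * -n) • T (1 + -n) := by
      rw [Module.End.mul_apply, Module.End.mul_apply, hs, hy, map_smul, hx, ← T_add]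
    have R : ((q ^ 2 : ℂ) • ((yh * sh) * xhi)) (T n)
        = (q ^ (2 : ℤ) * q ^ (-2 * -(-1 + n))) • T (-(-1 + n)) := by
      rw [LinearMap.smul_apply, Module.End.mul_apply, Module.End.mul_apply, hxE,
        show (T (-1) : LaurentPolynomial ℂ) * T n = T (-1 + n) from (T_add _ _).symm,
        hs, hy, smul_smul, hqq]
    rw [L, R, hq2, show (-(-1 + n) : ℤ) = 1 + -n by ring]
    congr 1
    ring
  have hXY : xh * (yh * sh * Th) = (q ^ 2 : ℂ) • ((yh * sh * Th) * xh * Th * Th) := by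
    have hr : (yh * sh * Th) * xh * Th * Th = (yh * sh) * xhi * Th := by
      rw [← hTXT_eq]
      simp only [mul_assoc]
    rw [hr, ← mul_assoc xh (yh * sh) Th, hq2op, smul_mul_assoc]
  -- the quadratic Hecke relation as operators
  have hheckeop : (Th - t • 1) * (Th + t⁻¹ • 1) = 0 := by
    apply LinearMap.ext
    intro f
    simp only [Module.End.mul_apply, LinearMap.sub_apply, LinearMap.add_apply,
      LinearMap.smul_apply, Module.End.one_apply, LinearMap.zero_apply,
      map_add, map_smul, hecke_pt]
    simp only [smul_sub, smul_smul, inv_mul_cancel₀ ht, mul_inv_cancel₀ ht,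
      one_smul, sub_smul]
    abel
  -- the algebra morphism on the free algebra
  set gmap : DGen → Module.End ℂ (LaurentPolynomial ℂ) := fun g =>
    match g with
    | DGen.X => xh
    | DGen.Xi => xhi
    | DGen.Y => yh * sh * Th
    | DGen.Yi => Yi
    | DGen.T => Th with hgmap
  set φ : FreeAlgebra ℂ DGen →ₐ[ℂ] Module.End ℂ (LaurentPolynomial ℂ) :=
    FreeAlgebra.lift ℂ gmap with hφ
  have hφX : φ (FreeAlgebra.ι ℂ DGen.X) = xh := FreeAlgebra.lift_ι_apply _ _
  have hφXi : φ (FreeAlgebra.ι ℂ DGen.Xi) = xhi := FreeAlgebra.lift_ι_apply _ _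
  have hφY : φ (FreeAlgebra.ι ℂ DGen.Y) = yh * sh * Th := FreeAlgebra.lift_ι_apply _ _
  have hφYi : φ (FreeAlgebra.ι ℂ DGen.Yi) = Yi := FreeAlgebra.lift_ι_apply _ _
  have hφT : φ (FreeAlgebra.ι ℂ DGen.T) = Th := FreeAlgebra.lift_ι_apply _ _
  have hrel : ∀ ⦃a b⦄, DahaRel q t a b → φ a = φ b := by
    intro a b r
    induction r with
    | XXi => rw [map_mul, map_one, hφX, hφXi, hxxhi]
    | XiX => rw [map_mul, map_one, hφX, hφXi, hxhix]
    | YYi => rw [map_mul, map_one, hφY, hφYi, hYYi]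
    | YiY => rw [map_mul, map_one, hφY, hφYi, hYiY]
    | TXT => rw [map_mul, map_mul, hφX, hφXi, hφT, hTXT_eq]
    | TYiT => rw [map_mul, map_mul, hφY, hφYi, hφT, hTYiT]
    | XY =>
        rw [map_mul, map_smul, map_mul, map_mul, map_mul, hφX, hφY, hφT, hXY]
    | hecke =>
        rw [map_mul, map_sub, map_add, map_zero, hφT, AlgHom.commutes, AlgHom.commutes,
          Algebra.algebraMap_eq_smul_one, Algebra.algebraMap_eq_smul_one, hheckeop]
  set π : DAHA q t →ₐ[ℂ] Module.End ℂ (LaurentPolynomial ℂ) :=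
    RingQuot.liftAlgHom ℂ ⟨φ, hrel⟩ with hπdef
  have hπ : ∀ a, π (RingQuot.mkAlgHom ℂ (DahaRel q t) a) = φ a := fun a =>
    RingQuot.liftAlgHom_mkAlgHom_apply ℂ φ hrel a
  have hπX : π (Xg q t) = xh := by
    show π (RingQuot.mkAlgHom ℂ (DahaRel q t) (FreeAlgebra.ι ℂ DGen.X)) = xh
    rw [hπ, hφX]
  have hπXi : π (Xig q t) = xhi := by
    show π (RingQuot.mkAlgHom ℂ (DahaRel q t) (FreeAlgebra.ι ℂ DGen.Xi)) = xhi
    rw [hπ, hφXi]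
  have hπY : π (Yg q t) = yh * sh * Th := by
    show π (RingQuot.mkAlgHom ℂ (DahaRel q t) (FreeAlgebra.ι ℂ DGen.Y)) = yh * sh * Th
    rw [hπ, hφY]
  have hπYi : π (Yig q t) = Yi := by
    show π (RingQuot.mkAlgHom ℂ (DahaRel q t) (FreeAlgebra.ι ℂ DGen.Yi)) = Yi
    rw [hπ, hφYi]
  have hπT : π (Tg q t) = Th := by
    show π (RingQuot.mkAlgHom ℂ (DahaRel q t) (FreeAlgebra.ι ℂ DGen.T)) = Th
    rw [hπ, hφT]
  -- relations in the DAHA needed for uniqueness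
  have hXXi_D : Xg q t * Xig q t = 1 := by
    have h := RingQuot.mkAlgHom_rel ℂ (DahaRel.XXi (q := q) (t := t))
    rw [map_mul, map_one] at h
    exact h
  have hYYi_D : Yg q t * Yig q t = 1 := by
    have h := RingQuot.mkAlgHom_rel ℂ (DahaRel.YYi (q := q) (t := t))
    rw [map_mul, map_one] at h
    exact h
  refine ⟨⟨⟨⟨xh, xhi, hxxhi, hxhix⟩, rfl⟩, ⟨⟨Th, Thi, hThThi, hThiTh⟩, rfl⟩,
    ⟨⟨yh * sh * Th, Yi, hYYi, hYiY⟩, rfl⟩⟩, hTXTX, hXTXT, ⟨Yi, hYYi, hYiY, hTYiT⟩,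
    hXY, hheckeop, π, ⟨hπX, hπT, hπY⟩, ?_⟩
  rintro π' ⟨h1, h2, h3⟩
  have hXi' : π' (Xig q t) = xhi := by
    have e1 : xh * π' (Xig q t) = 1 := by rw [← h1, ← map_mul, hXXi_D, map_one]
    calc π' (Xig q t) = xhi * xh * π' (Xig q t) := by rw [hxhix, one_mul]
      _ = xhi * (xh * π' (Xig q t)) := by rw [mul_assoc]
      _ = xhi := by rw [e1, mul_one]
  have hYi' : π' (Yig q t) = Yi := by
    have e1 : (yh * sh * Th) * π' (Yig q t) = 1 := by
      rw [← h3, ← map_mul, hYYi_D, map_one]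
    calc π' (Yig q t) = Yi * (yh * sh * Th) * π' (Yig q t) := by rw [hYiY, one_mul]
      _ = Yi * ((yh * sh * Th) * π' (Yig q t)) := by rw [mul_assoc]
      _ = Yi := by rw [e1, mul_one]
  apply RingQuot.ringQuot_ext'
  apply FreeAlgebra.hom_ext
  funext g
  simp only [Function.comp_apply, AlgHom.coe_comp]
  cases g with
  | X => exact h1.trans hπX.symm
  | Xi => exact hXi'.trans hπXi.symm
  | Y => exact h3.trans hπY.symm
  | Yi => exact hYi'.trans hπYi.symm
  | T => exact h2.trans hπT.symm
end
end

section
/- The operator Ŷ + Ŷ⁻¹ preserves the subspace ℂ[X + X⁻¹] of symmetric Laurent polynomials, and on this subspace it coincides with the Macdonald operator: for every symmetric Laurent polynomial f, (Ŷ + Ŷ⁻¹)(f) = L_{q,t}(f), where (L_{q,t} f)(X) = ((t·X⁻¹ − t⁻¹·X)/(X⁻¹ − X))·f(q⁻²X) + ((t⁻¹·X⁻¹ − t·X)/(X⁻¹ − X))·f(q²X). -/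
noncomputable section

open LaurentPolynomial in
private lemma macd_smul_T (a : ℂ) (n : ℤ) :
    a • (T n : LaurentPolynomial ℂ) = C a * T n := by
  rw [← single_eq_C_mul_T, T]; simpa using AddMonoidAlgebra.smul_single' a n 1

open LaurentPolynomial in
private lemma macd_key (F G : Module.End ℂ (LaurentPolynomial ℂ))
    (h : ∀ n : ℤ, F (T n) = G (T n)) : ∀ f, F f = G f := by
  intro f
  induction f using LaurentPolynomial.induction_on' with
  | add p q hp hq => rw [map_add, map_add, hp, hq]
  | C_mul_T n a => rw [← macd_smul_T, map_smul, map_smul, h]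

open LaurentPolynomial in
/-- The operator `Ŷ + Ŷ⁻¹` (where `Ŷ = ŷ ∘ ŝ ∘ T̂`) preserves the subspace of symmetric
Laurent polynomials, and on it coincides with the Macdonald operator `L_{q,t}`:
for symmetric `f`,
`(X⁻¹ - X)·(Ŷ + Ŷ⁻¹)f = (t·X⁻¹ - t⁻¹·X)·f(q⁻²X) + (t⁻¹·X⁻¹ - t·X)·f(q²X)`.
Here `ŝ(f)(X) = f(X⁻¹)`, `yhm : f(X) ↦ f(q⁻²X)`, `yhp : f(X) ↦ f(q²X)`, `T̂` is the
Demazure–Lusztig operator and `Yinv` is the inverse of `Ŷ = yhm ∘ ŝ ∘ T̂`. -/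
theorem macdonald_operator_on_symmetric (q t : ℂ) (hq : q ≠ 0) (ht : t ≠ 0)
    (sh yhm yhp Th Yinv : Module.End ℂ (LaurentPolynomial ℂ))
    (hs : ∀ n : ℤ, sh (T n) = T (-n))
    (hym : ∀ n : ℤ, yhm (T n) = q ^ (-2 * n) • T n)
    (hyp : ∀ n : ℤ, yhp (T n) = q ^ (2 * n) • T n)
    (hT : ∀ f, (T 2 - 1) * Th f = t • ((T 2 - 1) * sh f) + (t - t⁻¹) • (sh f - f))
    (hYinv1 : (yhm * sh * Th) * Yinv = 1)
    (hYinv2 : Yinv * (yhm * sh * Th) = 1) :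
    ∀ f : LaurentPolynomial ℂ, sh f = f →
      sh ((yhm * sh * Th + Yinv) f) = (yhm * sh * Th + Yinv) f ∧
      (T (-1) - T 1) * ((yhm * sh * Th + Yinv) f) =
        (t • T (-1) - t⁻¹ • T 1) * yhm f + (t⁻¹ • T (-1) - t • T 1) * yhp f := by
  intro f hf
  -- basic nonzero facts and T-identities
  have hX : (T 2 - 1 : LaurentPolynomial ℂ) ≠ 0 := by
    rw [sub_ne_zero, T, AddMonoidAlgebra.one_def, Ne, AddMonoidAlgebra.single_inj]
    norm_num
  have hT1 : (T 1 : LaurentPolynomial ℂ) ≠ 0 := by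
    rw [T, Ne, AddMonoidAlgebra.single_eq_zero]; norm_num
  have hTT : (T 2 : LaurentPolynomial ℂ) * T (-2) = 1 := by
    rw [← T_add]; norm_num
  have hT1m : (T 1 : LaurentPolynomial ℂ) * T (-1) = 1 := by
    rw [← T_add]; norm_num
  have hT2e : (T 2 : LaurentPolynomial ℂ) = T 1 * T 1 := by
    rw [← T_add]; norm_num
  have hUV : algebraMap ℂ (LaurentPolynomial ℂ) t * algebraMap ℂ (LaurentPolynomial ℂ) t⁻¹ = 1 := by
    rw [← map_mul, mul_inv_cancel₀ ht, map_one]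
  -- operator commutation facts
  have hsym1 : ∀ x, sh (yhm x) = yhp (sh x) := by
    refine macd_key (sh ∘ₗ yhm) (yhp ∘ₗ sh) ?_
    intro n
    simp [hym, hs, hyp, map_smul, mul_neg, neg_mul]
  have hsym2 : ∀ x, sh (yhp x) = yhm (sh x) := by
    refine macd_key (sh ∘ₗ yhp) (yhm ∘ₗ sh) ?_
    intro n
    simp [hym, hs, hyp, map_smul, mul_neg, neg_mul]
  have hmp : ∀ x, yhm (yhp x) = x := by
    refine macd_key (yhm ∘ₗ yhp) LinearMap.id ?_
    intro n
    rw [LinearMap.comp_apply, hyp, map_smul, hym, smul_smul, ← zpow_add₀ hq]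
    simp [neg_mul]
  have hsmul : ∀ (n : ℤ) (x), sh (T n * x) = T (-n) * sh x := by
    intro n
    refine macd_key (sh ∘ₗ LinearMap.mulLeft ℂ (T n)) (LinearMap.mulLeft ℂ (T (-n)) ∘ₗ sh) ?_
    intro m
    rw [LinearMap.comp_apply, LinearMap.comp_apply, LinearMap.mulLeft_apply,
      LinearMap.mulLeft_apply, ← T_add, hs, hs, ← T_add, neg_add]
  have hshA : ∀ (c : ℂ) (x), sh (algebraMap ℂ (LaurentPolynomial ℂ) c * x)
      = algebraMap ℂ (LaurentPolynomial ℂ) c * sh x := by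
    intro c x; rw [← Algebra.smul_def, map_smul, Algebra.smul_def]
  have hshW : ∀ x, sh ((algebraMap ℂ (LaurentPolynomial ℂ) t
        - algebraMap ℂ (LaurentPolynomial ℂ) t⁻¹) * x)
      = (algebraMap ℂ (LaurentPolynomial ℂ) t - algebraMap ℂ (LaurentPolynomial ℂ) t⁻¹) * sh x := by
    intro x; rw [← map_sub, hshA, map_sub]
  -- rewrite the DL relation with algebraMap constants
  have hT' : ∀ g, (T 2 - 1) * Th g
      = algebraMap ℂ (LaurentPolynomial ℂ) t * ((T 2 - 1) * sh g)
        + (algebraMap ℂ (LaurentPolynomial ℂ) t - algebraMap ℂ (LaurentPolynomial ℂ) t⁻¹)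
          * (sh g - g) := by
    intro g; rw [hT g, Algebra.smul_def, Algebra.smul_def, map_sub]
  have hab : sh (yhm f) = yhp f := by rw [hsym1 f, hf]
  have hba : sh (yhp f) = yhm f := by rw [hsym2 f, hf]
  -- E1
  have E1 : (T 2 - 1) * Th (yhm f)
      = algebraMap ℂ (LaurentPolynomial ℂ) t * ((T 2 - 1) * yhp f)
        + (algebraMap ℂ (LaurentPolynomial ℂ) t - algebraMap ℂ (LaurentPolynomial ℂ) t⁻¹)
          * (yhp f - yhm f) := by
    have h := hT' (yhm f); rwa [hab] at h
  -- E3 : apply sh to E1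
  have E3 : (T (-2) - 1) * sh (Th (yhm f))
      = algebraMap ℂ (LaurentPolynomial ℂ) t * ((T (-2) - 1) * yhm f)
        + (algebraMap ℂ (LaurentPolynomial ℂ) t - algebraMap ℂ (LaurentPolynomial ℂ) t⁻¹)
          * (yhm f - yhp f) := by
    have h := congrArg (⇑sh) E1
    rw [map_add, hshA, hshW, map_sub, hba, hab] at h
    have h1 : sh ((T 2 - 1) * Th (yhm f)) = (T (-2) - 1) * sh (Th (yhm f)) := by
      rw [sub_mul, one_mul, map_sub, hsmul, sub_mul, one_mul]
    have h2 : sh ((T 2 - 1) * yhp f) = (T (-2) - 1) * yhm f := by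
      rw [sub_mul, one_mul, map_sub, hsmul, hba, sub_mul, one_mul]
    rw [h1, h2] at h
    exact h
  -- E3'
  have E3' : (T 2 - 1) * sh (Th (yhm f))
      = algebraMap ℂ (LaurentPolynomial ℂ) t * ((T 2 - 1) * yhm f)
        + (algebraMap ℂ (LaurentPolynomial ℂ) t - algebraMap ℂ (LaurentPolynomial ℂ) t⁻¹)
          * (T 2 * (yhp f - yhm f)) := by
    linear_combination (-(T 2 : LaurentPolynomial ℂ)) * E3
      + (sh (Th (yhm f)) - algebraMap ℂ (LaurentPolynomial ℂ) t * yhm f) * hTT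
  -- the candidate for Yinv f
  set G := Th (yhm f) - (algebraMap ℂ (LaurentPolynomial ℂ) t
      - algebraMap ℂ (LaurentPolynomial ℂ) t⁻¹) * yhm f with hGdef
  have hshG : sh G = sh (Th (yhm f))
      - (algebraMap ℂ (LaurentPolynomial ℂ) t - algebraMap ℂ (LaurentPolynomial ℂ) t⁻¹)
        * yhp f := by
    rw [hGdef, map_sub, hshW, hab]
  have hTG := hT' G
  rw [hshG] at hTG
  have hGoalG : (T 2 - 1) * ((T 2 - 1) * Th G) = (T 2 - 1) * ((T 2 - 1) * yhm f) := by
    linear_combination (T 2 - 1) * hTG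
      + (algebraMap ℂ (LaurentPolynomial ℂ) t * (T 2 - 1)
          + (algebraMap ℂ (LaurentPolynomial ℂ) t - algebraMap ℂ (LaurentPolynomial ℂ) t⁻¹)) * E3'
      + (-(algebraMap ℂ (LaurentPolynomial ℂ) t - algebraMap ℂ (LaurentPolynomial ℂ) t⁻¹)) * E1
      + ((T 2 - 1) ^ 2 * yhm f) * hUV
      + (-(algebraMap ℂ (LaurentPolynomial ℂ) t - algebraMap ℂ (LaurentPolynomial ℂ) t⁻¹)
          * (T 2 - 1)) * hGdef
  have hThG : Th G = yhm f := mul_left_cancel₀ hX (mul_left_cancel₀ hX hGoalG)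
  have hYinvf : Yinv f = G := by
    have h2 := DFunLike.congr_fun hYinv2 G
    simp only [Module.End.mul_apply, Module.End.one_apply] at h2
    rw [hThG, hab, hmp] at h2
    exact h2
  -- Ŷ f = t • yhm f
  have hThf : Th f = algebraMap ℂ (LaurentPolynomial ℂ) t * f := by
    refine mul_left_cancel₀ hX ?_
    have e := hT' f
    rw [hf] at e
    linear_combination e
  have hYf : yhm (sh (Th f)) = algebraMap ℂ (LaurentPolynomial ℂ) t * yhm f := by
    rw [hThf, hshA, hf, ← Algebra.smul_def, map_smul, Algebra.smul_def]
  have happ : (yhm * sh * Th + Yinv) f = algebraMap ℂ (LaurentPolynomial ℂ) t * yhm f + G := by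
    simp only [LinearMap.add_apply, Module.End.mul_apply]
    rw [hYf, hYinvf]
  simp only [Algebra.smul_def]
  constructor
  · rw [happ]
    have hL : sh (algebraMap ℂ (LaurentPolynomial ℂ) t * yhm f + G)
        = algebraMap ℂ (LaurentPolynomial ℂ) t * yhp f
          + (sh (Th (yhm f))
            - (algebraMap ℂ (LaurentPolynomial ℂ) t - algebraMap ℂ (LaurentPolynomial ℂ) t⁻¹)
              * yhp f) := by
      rw [map_add, hshA, hab, hshG]
    rw [hL]
    refine mul_left_cancel₀ hX ?_
    linear_combination E3' - E1 - (T 2 - 1) * hGdef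
  · rw [happ]
    refine mul_left_cancel₀ hT1 ?_
    linear_combination (G - algebraMap ℂ (LaurentPolynomial ℂ) t⁻¹ * yhp f) * hT1m
      - (-(algebraMap ℂ (LaurentPolynomial ℂ) t) * yhm f - G
          + algebraMap ℂ (LaurentPolynomial ℂ) t⁻¹ * yhm f
          + algebraMap ℂ (LaurentPolynomial ℂ) t * yhp f) * hT2e
      + (1 - T 2) * hGdef - E1
end
end

section
/- Assume the complex numbers t·q^{2n} + t⁻¹·q^{−2n}, for n ≥ 0, are pairwise distinct. Then there exists a unique family (p_n)_{n≥0} of symmetric Laurent polynomials in ℂ[X^{±1}] such that: (a) L_{q,t}(p_n) = (t·q^{2n} + t⁻¹·q^{−2n})·p_n for every n ≥ 0, and (b) p_0 = 1 and, for each n ≥ 1, p_n = Xⁿ + X⁻ⁿ plus a ℂ-linear combination of the elements X^m + X^{−m} with 0 ≤ m < n (these are the Macdonald polynomials of type A_1). -/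
noncomputable section

open LaurentPolynomial Finset

namespace MacAux


def lam (q t : ℂ) (n : ℤ) : ℂ := t * q ^ (2*n) + t⁻¹ * q ^ (-2*n)

def ee (n : ℤ) : LaurentPolynomial ℂ := T n + T (-n)
def dd (n : ℤ) : LaurentPolynomial ℂ := T n - T (-n)

lemma T_mul' (a b : ℤ) : (T a * T b : LaurentPolynomial ℂ) = T (a+b) := (T_add a b).symm

lemma dd_zero : dd 0 = 0 := by simp [dd]
lemma dd_neg (n : ℤ) : dd (-n) = -dd n := by simp [dd]

lemma Mee (q t : ℂ) (yhm yhp : Module.End ℂ (LaurentPolynomial ℂ))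
    (hym : ∀ n : ℤ, yhm (T n) = q ^ (-2 * n) • T n)
    (hyp : ∀ n : ℤ, yhp (T n) = q ^ (2 * n) • T n) (m : ℤ) :
    (t • T (-1) - t⁻¹ • T 1) * yhm (ee m) + (t⁻¹ • T (-1) - t • T 1) * yhp (ee m)
      = lam q t (-m) • dd (m-1) - lam q t m • dd (m+1) := by
  simp only [ee, dd, map_add, hym, hyp, lam]
  simp only [smul_sub, smul_add, sub_mul, mul_add, smul_mul_assoc, mul_smul_comm,
    T_mul', smul_smul]
  have h1 : (-1 : ℤ) + m = m - 1 := by ring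
  have h2 : (1 : ℤ) + m = m + 1 := by ring
  have h3 : (-1 : ℤ) + -m = -(m+1) := by ring
  have h4 : (1 : ℤ) + -m = -(m-1) := by ring
  rw [h1, h2, h3, h4]
  simp only [neg_mul, mul_neg, neg_neg]
  module

lemma Nee (m : ℤ) : (T (-1) - T 1 : LaurentPolynomial ℂ) * ee m = dd (m-1) - dd (m+1) := by
  simp only [ee, dd, sub_mul, mul_add, T_mul']
  have h1 : (-1 : ℤ) + m = m - 1 := by ring
  have h2 : (1 : ℤ) + m = m + 1 := by ring
  have h3 : (-1 : ℤ) + -m = -(m+1) := by ring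
  have h4 : (1 : ℤ) + -m = -(m-1) := by ring
  rw [h1, h2, h3, h4]
  abel

lemma sh_ee (sh : Module.End ℂ (LaurentPolynomial ℂ))
    (hs : ∀ n : ℤ, sh (T n) = T (-n)) (m : ℤ) : sh (ee m) = ee m := by
  simp only [ee, map_add, hs, neg_neg]
  exact add_comm _ _

lemma S1 (n : ℕ) (b : ℕ → ℂ) (hb : ∀ m, n < m → b m = 0) :
    ∑ m ∈ range (n+1), b m • dd ((m:ℤ)-1)
      = ∑ k ∈ range (n+2), b (k+1) • dd (k:ℤ) - b 0 • dd 1 := by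
  rw [Finset.sum_range_succ' (fun m => b m • dd ((m:ℤ)-1)) n]
  rw [Finset.sum_range_succ (fun k => b (k+1) • dd (k:ℤ)) (n+1)]
  rw [Finset.sum_range_succ (fun k => b (k+1) • dd (k:ℤ)) n]
  rw [hb (n+1) (by omega), hb (n+2) (by omega)]
  have : ∀ i : ℕ, ((i:ℤ)+1) - 1 = (i:ℤ) := by intro i; ring
  simp only [Nat.cast_add, Nat.cast_one, this, Nat.cast_zero, zero_sub, dd_neg, zero_smul,
    add_zero, smul_neg]
  abel

lemma S2 (n : ℕ) (c : ℕ → ℂ) :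
    ∑ m ∈ range (n+1), c m • dd ((m:ℤ)+1)
      = ∑ k ∈ range (n+2), (if 1 ≤ k then c (k-1) else 0) • dd (k:ℤ) := by
  rw [Finset.sum_range_succ' (fun k => (if 1 ≤ k then c (k-1) else 0) • dd (k:ℤ)) (n+1)]
  simp only [Nat.cast_add, Nat.cast_one, Nat.cast_zero, le_add_iff_nonneg_left, zero_le,
    if_true, Nat.add_sub_cancel, Nat.lt_one_iff, if_neg (by omega : ¬ (1:ℕ) ≤ 0),
    zero_smul, add_zero]

lemma S3 (n : ℕ) (x : ℂ) :
    (x • dd 1 : LaurentPolynomial ℂ)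
      = ∑ k ∈ range (n+2), (if k = 1 then x else 0) • dd (k:ℤ) := by
  simp only [ite_smul, zero_smul]
  rw [Finset.sum_ite_eq' (range (n+2)) 1 (fun k => x • dd (k:ℤ))]
  simp

lemma reindex (n : ℕ) (b c : ℕ → ℂ) (hb : ∀ m, n < m → b m = 0) :
    ∑ m ∈ range (n+1), (b m • dd ((m:ℤ)-1) - c m • dd ((m:ℤ)+1))
      = ∑ k ∈ range (n+2),
          (b (k+1) - (if 1 ≤ k then c (k-1) else 0) - (if k = 1 then b 0 else 0)) • dd (k:ℤ) := by
  rw [Finset.sum_sub_distrib, S1 n b hb, S2 n c]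
  simp only [sub_smul]
  rw [Finset.sum_sub_distrib, Finset.sum_sub_distrib, ← S3 n (b 0)]
  abel

lemma dd_apply (j k : ℤ) :
    (dd j).coeff k = (if j = k then (1:ℂ) else 0) - (if -j = k then 1 else 0) := by
  rw [dd, AddMonoidAlgebra.coeff_sub, Finsupp.sub_apply, T_apply, T_apply]

lemma extract (n : ℕ) (E : ℕ → ℂ) (h : ∑ k ∈ range (n+2), E k • dd (k:ℤ) = 0)
    (k : ℕ) (hk1 : 1 ≤ k) (hk2 : k ≤ n+1) : E k = 0 := by
  have h2 := congrArg (fun f : LaurentPolynomial ℂ => f.coeff (k:ℤ)) h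
  rw [AddMonoidAlgebra.coeff_sum, Finset.sum_apply'] at h2
  have hterm : ∀ j ∈ range (n+2), (E j • dd (j:ℤ)).coeff (k:ℤ) = if j = k then E j else 0 := by
    intro j _
    rw [AddMonoidAlgebra.coeff_smul_apply, dd_apply]
    have h3 : ¬ (-(j:ℤ) = (k:ℤ)) := by omega
    rw [if_neg h3]
    have h4 : ((j:ℤ) = (k:ℤ)) ↔ j = k := by omega
    by_cases hjk : j = k
    · simp [hjk]
    · simp [hjk, h4]
  rw [Finset.sum_congr rfl hterm, Finset.sum_ite_eq' (range (n+2)) k E] at h2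
  have hkmem : k < n + 2 := by omega
  simpa [Finset.mem_range, hkmem] using h2

/-- The coefficient equations. -/
def Ecoef (q t c : ℂ) (a : ℕ → ℂ) (k : ℕ) : ℂ :=
  a (k+1) * (lam q t (-((k:ℤ)+1)) - c)
  - (if 1 ≤ k then a (k-1) * (lam q t ((k:ℤ)-1) - c) else 0)
  - (if k = 1 then a 0 * (lam q t 0 - c) else 0)

lemma master (q t : ℂ) (yhm yhp : Module.End ℂ (LaurentPolynomial ℂ))
    (hym : ∀ n : ℤ, yhm (T n) = q ^ (-2 * n) • T n)
    (hyp : ∀ n : ℤ, yhp (T n) = q ^ (2 * n) • T n)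
    (n : ℕ) (a : ℕ → ℂ) (ha : ∀ m, n < m → a m = 0) (c : ℂ) :
    ((t • T (-1) - t⁻¹ • T 1) * yhm (∑ m ∈ range (n+1), a m • ee m)
        + (t⁻¹ • T (-1) - t • T 1) * yhp (∑ m ∈ range (n+1), a m • ee m)
      = c • ((T (-1) - T 1) * ∑ m ∈ range (n+1), a m • ee m))
    ↔ (∀ k, 1 ≤ k → k ≤ n+1 → Ecoef q t c a k = 0) := by
  have hL : (t • T (-1) - t⁻¹ • T 1) * yhm (∑ m ∈ range (n+1), a m • ee m)
        + (t⁻¹ • T (-1) - t • T 1) * yhp (∑ m ∈ range (n+1), a m • ee m)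
      = ∑ m ∈ range (n+1),
          a m • (lam q t (-(m:ℤ)) • dd ((m:ℤ)-1) - lam q t (m:ℤ) • dd ((m:ℤ)+1)) := by
    rw [map_sum, map_sum, Finset.mul_sum, Finset.mul_sum, ← Finset.sum_add_distrib]
    refine Finset.sum_congr rfl fun m _ => ?_
    rw [map_smul, map_smul, mul_smul_comm, mul_smul_comm, ← smul_add,
      Mee q t yhm yhp hym hyp (m:ℤ)]
  have hR : c • ((T (-1) - T 1) * ∑ m ∈ range (n+1), a m • ee m)
      = ∑ m ∈ range (n+1), a m • (c • (dd ((m:ℤ)-1) - dd ((m:ℤ)+1))) := by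
    rw [Finset.mul_sum, Finset.smul_sum]
    refine Finset.sum_congr rfl fun m _ => ?_
    rw [mul_smul_comm, Nee (m:ℤ), smul_comm]
  rw [hL, hR, ← sub_eq_zero, ← Finset.sum_sub_distrib]
  have hsum : ∀ m ∈ range (n+1),
      a m • (lam q t (-(m:ℤ)) • dd ((m:ℤ)-1) - lam q t (m:ℤ) • dd ((m:ℤ)+1))
        - a m • (c • (dd ((m:ℤ)-1) - dd ((m:ℤ)+1)))
      = (a m * (lam q t (-(m:ℤ)) - c)) • dd ((m:ℤ)-1)
        - (a m * (lam q t (m:ℤ) - c)) • dd ((m:ℤ)+1) := by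
    intro m _
    module
  rw [Finset.sum_congr rfl hsum,
    reindex n (fun m => a m * (lam q t (-(m:ℤ)) - c)) (fun m => a m * (lam q t (m:ℤ) - c))
      (fun m hm => by show a m * _ = 0; rw [ha m hm, zero_mul])]
  have hco : ∀ k : ℕ, 1 ≤ k →
      (a (k+1) * (lam q t (-((k+1:ℕ):ℤ)) - c)
        - (if 1 ≤ k then a (k-1) * (lam q t (((k-1:ℕ)):ℤ) - c) else 0)
        - (if k = 1 then a 0 * (lam q t (-((0:ℕ):ℤ)) - c) else 0)) = Ecoef q t c a k := by
    intro k hk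
    have e1 : (((k+1:ℕ)):ℤ) = (k:ℤ)+1 := by push_cast; ring
    have e2 : (((k-1:ℕ)):ℤ) = (k:ℤ)-1 := by omega
    rw [Ecoef, e1, e2, if_pos hk]
    norm_num
  constructor
  · intro h k hk1 hk2
    rw [← hco k hk1]
    exact extract n _ h k hk1 hk2
  · intro h
    refine Finset.sum_eq_zero fun k hk => ?_
    rcases Nat.eq_zero_or_pos k with hk0 | hk1
    · subst hk0; simp [dd_zero]
    · rw [hco k hk1, h k hk1 (by simpa [Nat.lt_succ_iff] using mem_range.mp hk)]
      exact zero_smul _ _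


lemma lam_ne {q t : ℂ}
    (hdist : Function.Injective
      fun n : ℕ => t * q ^ (2 * (n : ℤ)) + t⁻¹ * q ^ (-2 * (n : ℤ)))
    {m n : ℕ} (h : m ≠ n) : lam q t (m:ℤ) ≠ lam q t (n:ℤ) :=
  fun he => h (hdist he)

def gc (q t : ℂ) (n : ℕ) : ℕ → ℂ
  | 0 => 1
  | 1 => 0
  | (j+2) => gc q t n j * (lam q t (-((n:ℤ) - j)) - lam q t n)
      / ((lam q t ((n:ℤ) - j - 2) - lam q t n) * (if (n:ℤ) - j - 2 = 0 then 2 else 1))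

def ac (q t : ℂ) (n m : ℕ) : ℂ := if m ≤ n then gc q t n (n - m) else 0

lemma ac_top (q t : ℂ) (n : ℕ) : ac q t n n = 1 := by simp [ac, gc]

lemma ac_gt (q t : ℂ) {n m : ℕ} (h : n < m) : ac q t n m = 0 := by
  simp only [ac, if_neg (by omega : ¬ m ≤ n)]

lemma ac_sub_one (q t : ℂ) {n : ℕ} (hn : 1 ≤ n) : ac q t n (n-1) = 0 := by
  simp only [ac, if_pos (by omega : n - 1 ≤ n), show n - (n-1) = 1 by omega, gc]

lemma ac_rec {q t : ℂ}
    (hdist : Function.Injective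
      fun n : ℕ => t * q ^ (2 * (n : ℤ)) + t⁻¹ * q ^ (-2 * (n : ℤ)))
    {n m : ℕ} (h : m+2 ≤ n) :
    ac q t n m * ((lam q t (m:ℤ) - lam q t (n:ℤ)) * (if m = 0 then 2 else 1))
      = ac q t n (m+2) * (lam q t (-((m:ℤ)+2)) - lam q t (n:ℤ)) := by
  have hle : m ≤ n := by omega
  have e0 : n - m = (n - m - 2) + 2 := by omega
  have e1 : (n:ℤ) - (↑(n - m - 2) : ℤ) = (m:ℤ) + 2 := by omega
  have e3 : n - (m+2) = n - m - 2 := by omega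
  have hif : ((m:ℤ) = 0) ↔ (m = 0) := by omega
  rw [ac, ac, if_pos hle, if_pos h, e0, e3, gc, e1,
    show (m:ℤ) + 2 - 2 = (m:ℤ) by ring]
  have hne : (lam q t (m:ℤ) - lam q t (n:ℤ)) * (if m = 0 then (2:ℂ) else 1) ≠ 0 := by
    apply mul_ne_zero
    · exact sub_ne_zero.mpr (lam_ne hdist (by omega))
    · split <;> norm_num
  rw [show (if (m:ℤ) = 0 then (2:ℂ) else 1) = (if m = 0 then (2:ℂ) else 1) by simp [hif]]
  rw [div_mul_cancel₀ _ hne]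

lemma Evanish {q t : ℂ}
    (hdist : Function.Injective
      fun n : ℕ => t * q ^ (2 * (n : ℤ)) + t⁻¹ * q ^ (-2 * (n : ℤ)))
    {n : ℕ} (hn : 1 ≤ n) (k : ℕ) (hk1 : 1 ≤ k) (hk2 : k ≤ n+1) :
    Ecoef q t (lam q t (n:ℤ)) (ac q t n) k = 0 := by
  rcases eq_or_lt_of_le hk2 with hkn1 | hkn
  · subst hkn1
    unfold Ecoef
    rw [if_pos hk1, if_neg (by omega : ¬ n+1 = 1), ac_gt q t (by omega : n < n+1+1),
      show n+1-1 = n by omega, ac_top,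
      show ((↑(n+1):ℤ)) - 1 = (n:ℤ) by push_cast; ring]
    ring
  · have hkn' : k ≤ n := by omega
    rcases eq_or_lt_of_le hkn' with hkeq | hklt
    · subst hkeq
      unfold Ecoef
      rw [ac_gt q t (by omega : k < k+1), ac_sub_one q t hk1]
      have h3 : (if k = 1 then ac q t k 0 * (lam q t 0 - lam q t (k:ℤ)) else 0) = 0 := by
        split
        · have h4 := ac_sub_one q t hk1
          rw [show k - 1 = 0 by omega] at h4
          rw [h4, zero_mul]
        · rfl
      rw [h3]
      simp
    · have hrec := ac_rec hdist (show (k-1)+2 ≤ n by omega)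
      rw [show (k-1)+2 = k+1 by omega, show ((↑(k-1):ℕ):ℤ) = (k:ℤ)-1 by omega,
        show -(((k:ℤ)-1)+2) = -((k:ℤ)+1) by ring] at hrec
      unfold Ecoef
      rw [if_pos hk1]
      rcases Nat.eq_or_lt_of_le hk1 with h1' | h2'
      · subst h1'
        norm_num at hrec ⊢
        linear_combination -hrec
      · rw [if_neg (by omega : ¬ k - 1 = 0), mul_one] at hrec
        rw [if_neg (by omega : ¬ k = 1)]
        linear_combination -hrec

lemma coeff_unique {q t : ℂ}
    (hdist : Function.Injective
      fun n : ℕ => t * q ^ (2 * (n : ℤ)) + t⁻¹ * q ^ (-2 * (n : ℤ)))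
    {n : ℕ} (hn : 1 ≤ n) (a a' : ℕ → ℂ)
    (ha : ∀ m, n < m → a m = 0) (ha' : ∀ m, n < m → a' m = 0)
    (htop : a n = 1) (htop' : a' n = 1)
    (hE : ∀ k, 1 ≤ k → k ≤ n+1 → Ecoef q t (lam q t (n:ℤ)) a k = 0)
    (hE' : ∀ k, 1 ≤ k → k ≤ n+1 → Ecoef q t (lam q t (n:ℤ)) a' k = 0) :
    ∀ m, a m = a' m := by
  have key : ∀ j : ℕ, ∀ m : ℕ, n - m = j → a m = a' m := by
    intro j
    induction j using Nat.strong_induction_on with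
    | _ j IH =>
      intro m hm
      rcases lt_trichotomy m n with hlt | heq | hgt
      · -- m < n
        have h2 : a (m+2) = a' (m+2) := IH (n - (m+2)) (by omega) (m+2) rfl
        have Em := hE (m+1) (by omega) (by omega)
        have Em' := hE' (m+1) (by omega) (by omega)
        unfold Ecoef at Em Em'
        rw [if_pos (by omega : 1 ≤ m+1), show m+1+1 = m+2 by omega,
          show m+1-1 = m by omega,
          show ((↑(m+1):ℕ):ℤ) - 1 = (m:ℤ) by push_cast; ring,
          show -(((↑(m+1):ℕ):ℤ)+1) = -((m:ℤ)+2) by push_cast; ring] at Em Em'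
        have hY : lam q t (m:ℤ) - lam q t (n:ℤ) ≠ 0 :=
          sub_ne_zero.mpr (lam_ne hdist (by omega))
        rcases Nat.eq_zero_or_pos m with hm0 | hm1
        · subst hm0
          rw [if_pos rfl] at Em Em'
          norm_num at Em Em' ⊢
          have hz : (a 0 - a' 0) * (2 * (lam q t 0 - lam q t (n:ℤ))) = 0 := by
            linear_combination (lam q t (-2:ℤ) - lam q t (n:ℤ)) * h2 - Em + Em'
          rcases mul_eq_zero.mp hz with h | h
          · exact sub_eq_zero.mp h
          · exfalso
            have hY0 : lam q t ((0:ℕ):ℤ) - lam q t (n:ℤ) ≠ 0 :=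
              sub_ne_zero.mpr (lam_ne hdist (by omega))
            rw [Nat.cast_zero] at hY0
            rcases mul_eq_zero.mp h with h' | h'
            · norm_num at h'
            · exact hY0 h'
        · rw [if_neg (by omega : ¬ m+1 = 1)] at Em Em'
          have hz : (a m - a' m) * (lam q t (m:ℤ) - lam q t (n:ℤ)) = 0 := by
            linear_combination (lam q t (-((m:ℤ)+2)) - lam q t (n:ℤ)) * h2 - Em + Em'
          rcases mul_eq_zero.mp hz with h | h
          · exact sub_eq_zero.mp h
          · exact absurd h hY
      · subst heq; rw [htop, htop']
      · rw [ha m hgt, ha' m hgt]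
  exact fun m => key (n - m) m rfl


end MacAux

open MacAux

open LaurentPolynomial in
/-- **Macdonald polynomials of type `A₁`**: if the numbers `t·q^{2n} + t⁻¹·q^{-2n}` (`n ≥ 0`)
are pairwise distinct, there is a unique family `(p_n)` of symmetric Laurent polynomials with
`L_{q,t}(p_n) = (t·q^{2n} + t⁻¹·q^{-2n})·p_n` (stated multiplied through by `X⁻¹ - X`),
`p_0 = 1` and `p_n = Xⁿ + X⁻ⁿ + Σ_{0 ≤ m < n} c_m (X^m + X^{-m})` for `n ≥ 1`.
Here `sh : f(X) ↦ f(X⁻¹)`, `yhm : f(X) ↦ f(q⁻²X)`, `yhp : f(X) ↦ f(q²X)`. -/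
theorem macdonald_polynomials_exist_unique (q t : ℂ) (hq : q ≠ 0) (ht : t ≠ 0)
    (sh yhm yhp : Module.End ℂ (LaurentPolynomial ℂ))
    (hs : ∀ n : ℤ, sh (T n) = T (-n))
    (hym : ∀ n : ℤ, yhm (T n) = q ^ (-2 * n) • T n)
    (hyp : ∀ n : ℤ, yhp (T n) = q ^ (2 * n) • T n)
    (hdist : Function.Injective
      fun n : ℕ => t * q ^ (2 * (n : ℤ)) + t⁻¹ * q ^ (-2 * (n : ℤ))) :
    ∃! p : ℕ → LaurentPolynomial ℂ,
      (∀ n : ℕ, sh (p n) = p n) ∧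
      (∀ n : ℕ,
        (t • T (-1) - t⁻¹ • T 1) * yhm (p n) + (t⁻¹ • T (-1) - t • T 1) * yhp (p n) =
          (t * q ^ (2 * (n : ℤ)) + t⁻¹ * q ^ (-2 * (n : ℤ))) • ((T (-1) - T 1) * p n)) ∧
      p 0 = 1 ∧
      (∀ n : ℕ, 1 ≤ n → ∃ c : ℕ → ℂ,
        p n = T (n : ℤ) + T (-(n : ℤ)) +
          ∑ m ∈ Finset.range n, c m • (T (m : ℤ) + T (-(m : ℤ)))) := by
  refine ⟨fun n => if n = 0 then (1 : LaurentPolynomial ℂ)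
      else ∑ m ∈ Finset.range (n+1), ac q t n m • ee m, ⟨?_, ?_, ?_, ?_⟩, ?_⟩
  · -- symmetry
    intro n
    cases n with
    | zero =>
      show sh (1 : LaurentPolynomial ℂ) = 1
      rw [show (1 : LaurentPolynomial ℂ) = T 0 from (T_zero (R := ℂ)).symm, hs 0, neg_zero]
    | succ n =>
      simp only [Nat.succ_ne_zero, if_false, map_sum]
      exact Finset.sum_congr rfl fun m _ => by rw [map_smul, sh_ee sh hs]
  · -- eigen equation
    intro n
    cases n with
    | zero =>
      show (t • T (-1) - t⁻¹ • T 1) * yhm 1 + (t⁻¹ • T (-1) - t • T 1) * yhp 1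
        = (t * q ^ (2 * ((0:ℕ):ℤ)) + t⁻¹ * q ^ (-2 * ((0:ℕ):ℤ))) • ((T (-1) - T 1) * 1)
      rw [show (1 : LaurentPolynomial ℂ) = T 0 from (T_zero (R := ℂ)).symm, hym 0, hyp 0]
      simp only [Nat.cast_zero, mul_zero, neg_zero, zpow_zero, one_smul]
      rw [T_zero]
      simp only [mul_one]
      module
    | succ n =>
      simp only [Nat.succ_ne_zero, if_false]
      exact (master q t yhm yhp hym hyp (n+1) (ac q t (n+1))
        (fun m hm => ac_gt q t hm) (lam q t ((n+1:ℕ):ℤ))).mpr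
        (fun k hk1 hk2 => Evanish hdist (by omega) k hk1 hk2)
  · -- p 0 = 1
    simp
  · -- shape
    intro n hn
    cases n with
    | zero => omega
    | succ n =>
      refine ⟨ac q t (n+1), ?_⟩
      simp only [Nat.succ_ne_zero, if_false]
      rw [Finset.sum_range_succ, ac_top, one_smul]
      exact add_comm _ _
  · -- uniqueness
    intro p' ⟨h1', h2', h3', h4'⟩
    funext n
    cases n with
    | zero => rw [h3']; simp
    | succ n =>
      set N := n + 1 with hN
      obtain ⟨c, hc⟩ := h4' N (by omega)
      set a' : ℕ → ℂ := fun m => if m = N then 1 else if m < N then c m else 0 with ha'def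
      have ha' : ∀ m, N < m → a' m = 0 := by
        intro m hm
        simp only [ha'def, if_neg (by omega : ¬ m = N), if_neg (by omega : ¬ m < N)]
      have htop' : a' N = 1 := by simp [ha'def]
      have hp' : p' N = ∑ m ∈ Finset.range (N+1), a' m • ee m := by
        rw [hc, show ∑ m ∈ Finset.range (N+1), a' m • ee m
            = ∑ m ∈ Finset.range N, a' m • ee m + a' N • ee N from Finset.sum_range_succ _ N,
          htop', one_smul]
        have hsum : ∑ m ∈ Finset.range N, a' m • ee m
            = ∑ m ∈ Finset.range N, c m • (T (m:ℤ) + T (-(m:ℤ))) := by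
          refine Finset.sum_congr rfl fun m hm => ?_
          have hmN := Finset.mem_range.mp hm
          rw [show a' m = c m by
            simp only [ha'def]
            rw [if_neg (by omega : ¬ m = N), if_pos hmN]]
          rfl
        rw [hsum]
        exact add_comm _ _
      have heq := h2' N
      rw [hp'] at heq
      have hE' := (master q t yhm yhp hym hyp N a' ha' (lam q t (N:ℤ))).mp heq
      have hEac : ∀ k, 1 ≤ k → k ≤ N+1 → Ecoef q t (lam q t (N:ℤ)) (ac q t N) k = 0 :=
        fun k hk1 hk2 => Evanish hdist (by omega) k hk1 hk2
      have hunique := coeff_unique hdist (by omega : 1 ≤ N) a' (ac q t N) ha'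
        (fun m hm => ac_gt q t hm) htop' (ac_top q t N) hE' hEac
      simp only [show N ≠ 0 by omega, if_false]
      rw [hp']
      exact Finset.sum_congr rfl fun m _ => by rw [hunique m]
end
end

section
/- The assignments τ⁺(X) = X, τ⁺(T) = T, τ⁺(Y) = q⁻¹·X·Y, and τ⁻(X) = q·Y·X, τ⁻(T) = T, τ⁻(Y) = Y extend (uniquely) to ℂ-algebra automorphisms τ⁺ and τ⁻ of the double affine Hecke algebra H_{q,t}. -/
noncomputable section

namespace DahaAux

variable (q t : ℂ)

lemma x_xi : Xg q t * Xig q t = 1 := by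
  simpa [Xg, Xig] using RingQuot.mkAlgHom_rel ℂ (DahaRel.XXi (q := q) (t := t))

lemma xi_x : Xig q t * Xg q t = 1 := by
  simpa [Xg, Xig] using RingQuot.mkAlgHom_rel ℂ (DahaRel.XiX (q := q) (t := t))

lemma y_yi : Yg q t * Yig q t = 1 := by
  simpa [Yg, Yig] using RingQuot.mkAlgHom_rel ℂ (DahaRel.YYi (q := q) (t := t))

lemma yi_y : Yig q t * Yg q t = 1 := by
  simpa [Yg, Yig] using RingQuot.mkAlgHom_rel ℂ (DahaRel.YiY (q := q) (t := t))

lemma TxT : Tg q t * (Xg q t * Tg q t) = Xig q t := by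
  simpa [Tg, Xg, Xig, mul_assoc] using RingQuot.mkAlgHom_rel ℂ (DahaRel.TXT (q := q) (t := t))

lemma TyiT : Tg q t * (Yig q t * Tg q t) = Yg q t := by
  simpa [Tg, Yg, Yig, mul_assoc] using RingQuot.mkAlgHom_rel ℂ (DahaRel.TYiT (q := q) (t := t))

lemma xy : Xg q t * Yg q t = (q ^ 2) • (Yg q t * (Xg q t * (Tg q t * Tg q t))) := by
  simpa [Xg, Yg, Tg, mul_assoc] using RingQuot.mkAlgHom_rel ℂ (DahaRel.XY (q := q) (t := t))

lemma hecke : (Tg q t - algebraMap ℂ (DAHA q t) t) *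
    (Tg q t + algebraMap ℂ (DAHA q t) t⁻¹) = 0 := by
  simpa [Tg] using RingQuot.mkAlgHom_rel ℂ (DahaRel.hecke (q := q) (t := t))

def Ti : DAHA q t := Tg q t + algebraMap ℂ (DAHA q t) (t⁻¹ - t)

lemma T_Ti (ht : t ≠ 0) : Tg q t * Ti q t = 1 := by
  have h := hecke q t
  have h1 : algebraMap ℂ (DAHA q t) t * algebraMap ℂ (DAHA q t) t⁻¹ = 1 := by
    rw [← map_mul, mul_inv_cancel₀ ht, map_one]
  have hc : algebraMap ℂ (DAHA q t) t * Tg q t = Tg q t * algebraMap ℂ (DAHA q t) t :=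
    Algebra.commutes t (Tg q t)
  rw [sub_mul, mul_add, mul_add, hc, h1] at h
  rw [Ti, map_sub, ← sub_eq_zero, ← h]
  noncomm_ring
  simp only [mul_smul_comm, smul_mul_assoc]
  abel

lemma Ti_T (ht : t ≠ 0) : Ti q t * Tg q t = 1 := by
  have h := hecke q t
  have h1 : algebraMap ℂ (DAHA q t) t * algebraMap ℂ (DAHA q t) t⁻¹ = 1 := by
    rw [← map_mul, mul_inv_cancel₀ ht, map_one]
  have hc : Tg q t * algebraMap ℂ (DAHA q t) t⁻¹ = algebraMap ℂ (DAHA q t) t⁻¹ * Tg q t :=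
    (Algebra.commutes t⁻¹ (Tg q t)).symm
  rw [sub_mul, mul_add, mul_add, hc, h1] at h
  rw [Ti, map_sub, ← sub_eq_zero, ← h]
  noncomm_ring
  simp only [mul_smul_comm, smul_mul_assoc]
  abel

-- cancellation lemmas
lemma x_xi_c (z : DAHA q t) : Xg q t * (Xig q t * z) = z := by
  rw [← mul_assoc, x_xi, one_mul]
lemma xi_x_c (z : DAHA q t) : Xig q t * (Xg q t * z) = z := by
  rw [← mul_assoc, xi_x, one_mul]
lemma y_yi_c (z : DAHA q t) : Yg q t * (Yig q t * z) = z := by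
  rw [← mul_assoc, y_yi, one_mul]
lemma yi_y_c (z : DAHA q t) : Yig q t * (Yg q t * z) = z := by
  rw [← mul_assoc, yi_y, one_mul]
lemma T_Ti_c (ht : t ≠ 0) (z : DAHA q t) : Tg q t * (Ti q t * z) = z := by
  rw [← mul_assoc, T_Ti q t ht, one_mul]
lemma Ti_T_c (ht : t ≠ 0) (z : DAHA q t) : Ti q t * (Tg q t * z) = z := by
  rw [← mul_assoc, Ti_T q t ht, one_mul]

lemma Tyi (ht : t ≠ 0) : Tg q t * Yig q t = Yg q t * Ti q t := by
  calc Tg q t * Yig q t = Tg q t * Yig q t * (Tg q t * Ti q t) := by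
        rw [T_Ti q t ht, mul_one]
    _ = (Tg q t * (Yig q t * Tg q t)) * Ti q t := by noncomm_ring
    _ = Yg q t * Ti q t := by rw [TyiT]

lemma xiT : Xig q t * Tg q t = Tg q t * (Xg q t * (Tg q t * Tg q t)) := by
  conv_lhs => rw [← TxT q t]
  noncomm_ring

lemma xT (ht : t ≠ 0) : Xg q t * Tg q t = Ti q t * Xig q t := by
  calc Xg q t * Tg q t = (Ti q t * Tg q t) * (Xg q t * Tg q t) := by
        rw [Ti_T q t ht, one_mul]
    _ = Ti q t * (Tg q t * (Xg q t * Tg q t)) := by noncomm_ring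
    _ = Ti q t * Xig q t := by rw [TxT]

lemma xyinv (hq : q ≠ 0) :
    Yg q t * (Xg q t * (Tg q t * Tg q t)) = (q ^ 2)⁻¹ • (Xg q t * Yg q t) := by
  rw [xy q t, smul_smul, inv_mul_cancel₀ (pow_ne_zero 2 hq), one_smul]

-- identity A
lemma idA (hq : q ≠ 0) (ht : t ≠ 0) :
    Tg q t * (Yig q t * (Xig q t * Tg q t)) = (q ^ 2)⁻¹ • (Xg q t * Yg q t) := by
  calc Tg q t * (Yig q t * (Xig q t * Tg q t))
      = (Tg q t * Yig q t) * (Xig q t * Tg q t) := by noncomm_ring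
    _ = (Yg q t * Ti q t) * (Tg q t * (Xg q t * (Tg q t * Tg q t))) := by
        rw [Tyi q t ht, xiT]
    _ = Yg q t * (Ti q t * (Tg q t * (Xg q t * (Tg q t * Tg q t)))) := by noncomm_ring
    _ = Yg q t * (Xg q t * (Tg q t * Tg q t)) := by rw [Ti_T_c q t ht]
    _ = (q ^ 2)⁻¹ • (Xg q t * Yg q t) := xyinv q t hq

lemma b1 : Yig q t * (Xg q t * Yg q t) = (q ^ 2) • (Xg q t * (Tg q t * Tg q t)) := by
  rw [xy q t, mul_smul_comm, yi_y_c]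

lemma b2 : Yig q t * Xg q t = (q ^ 2) • (Xg q t * (Tg q t * (Tg q t * Yig q t))) := by
  calc Yig q t * Xg q t = Yig q t * (Xg q t * (Yg q t * Yig q t)) := by
        rw [y_yi, mul_one]
    _ = (Yig q t * (Xg q t * Yg q t)) * Yig q t := by noncomm_ring
    _ = ((q ^ 2) • (Xg q t * (Tg q t * Tg q t))) * Yig q t := by rw [b1]
    _ = (q ^ 2) • (Xg q t * (Tg q t * (Tg q t * Yig q t))) := by
        rw [smul_mul_assoc]; noncomm_ring

lemma b3 : Xig q t * Yig q t = (q ^ 2) • (Tg q t * (Tg q t * (Yig q t * Xig q t))) := by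
  calc Xig q t * Yig q t = Xig q t * ((Yig q t * Xg q t) * Xig q t) := by
        rw [mul_assoc, x_xi, mul_one]
    _ = Xig q t * (((q ^ 2) • (Xg q t * (Tg q t * (Tg q t * Yig q t)))) * Xig q t) := by
        rw [b2]
    _ = (q ^ 2) • (Xig q t * (Xg q t * (Tg q t * (Tg q t * (Yig q t * Xig q t))))) := by
        rw [smul_mul_assoc, mul_smul_comm]; noncomm_ring
    _ = (q ^ 2) • (Tg q t * (Tg q t * (Yig q t * Xig q t))) := by rw [xi_x_c]

lemma b3inv (hq : q ≠ 0) :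
    Tg q t * (Tg q t * (Yig q t * Xig q t)) = (q ^ 2)⁻¹ • (Xig q t * Yig q t) := by
  rw [b3 q t, smul_smul, inv_mul_cancel₀ (pow_ne_zero 2 hq), one_smul]

-- identity B
lemma idB (hq : q ≠ 0) (ht : t ≠ 0) :
    Tg q t * (Yg q t * (Xg q t * Tg q t)) = (q ^ 2)⁻¹ • (Xig q t * Yig q t) := by
  calc Tg q t * (Yg q t * (Xg q t * Tg q t))
      = Tg q t * ((Tg q t * (Yig q t * Tg q t)) * (Ti q t * Xig q t)) := by
        rw [TyiT, ← xT q t ht]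
    _ = Tg q t * (Tg q t * (Yig q t * (Tg q t * (Ti q t * Xig q t)))) := by noncomm_ring
    _ = Tg q t * (Tg q t * (Yig q t * Xig q t)) := by rw [T_Ti_c q t ht]
    _ = (q ^ 2)⁻¹ • (Xig q t * Yig q t) := b3inv q t hq

lemma c1 (ht : t ≠ 0) :
    Xg q t * (Yg q t * (Ti q t * (Ti q t * Xig q t))) = (q ^ 2) • Yg q t := by
  calc Xg q t * (Yg q t * (Ti q t * (Ti q t * Xig q t)))
      = (Xg q t * Yg q t) * (Ti q t * (Ti q t * Xig q t)) := by noncomm_ring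
    _ = ((q ^ 2) • (Yg q t * (Xg q t * (Tg q t * Tg q t)))) *
          (Ti q t * (Ti q t * Xig q t)) := by rw [xy q t]
    _ = (q ^ 2) • (Yg q t * (Xg q t * (Tg q t * (Tg q t *
          (Ti q t * (Ti q t * Xig q t)))))) := by rw [smul_mul_assoc]; noncomm_ring
    _ = (q ^ 2) • (Yg q t * (Xg q t * Xig q t)) := by
        rw [T_Ti_c q t ht, T_Ti_c q t ht]
    _ = (q ^ 2) • Yg q t := by rw [x_xi, mul_one]

-- identity C
lemma idC (hq : q ≠ 0) (ht : t ≠ 0) :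
    Tg q t * (Yig q t * (Xg q t * Tg q t)) = (q ^ 2) • (Xig q t * Yg q t) := by
  calc Tg q t * (Yig q t * (Xg q t * Tg q t))
      = (Tg q t * Yig q t) * (Xg q t * Tg q t) := by noncomm_ring
    _ = (Yg q t * Ti q t) * (Ti q t * Xig q t) := by rw [Tyi q t ht, xT q t ht]
    _ = Yg q t * (Ti q t * (Ti q t * Xig q t)) := by noncomm_ring
    _ = Xig q t * (Xg q t * (Yg q t * (Ti q t * (Ti q t * Xig q t)))) := by
        rw [xi_x_c]
    _ = Xig q t * ((q ^ 2) • Yg q t) := by rw [c1 q t ht]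
    _ = (q ^ 2) • (Xig q t * Yg q t) := by rw [mul_smul_comm]

-- product-one lemmas
lemma prodP1 (hq : q ≠ 0) :
    (q⁻¹ • (Xg q t * Yg q t)) * (q • (Yig q t * Xig q t)) = 1 := by
  rw [smul_mul_assoc, mul_smul_comm, smul_smul, inv_mul_cancel₀ hq, one_smul,
    mul_assoc, y_yi_c, x_xi]

lemma prodP2 (hq : q ≠ 0) :
    (q • (Yig q t * Xig q t)) * (q⁻¹ • (Xg q t * Yg q t)) = 1 := by
  rw [smul_mul_assoc, mul_smul_comm, smul_smul, mul_inv_cancel₀ hq, one_smul,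
    mul_assoc, xi_x_c, yi_y]

lemma prodPi1 (hq : q ≠ 0) :
    (q • (Xig q t * Yg q t)) * (q⁻¹ • (Yig q t * Xg q t)) = 1 := by
  rw [smul_mul_assoc, mul_smul_comm, smul_smul, mul_inv_cancel₀ hq, one_smul,
    mul_assoc, y_yi_c, xi_x]

lemma prodPi2 (hq : q ≠ 0) :
    (q⁻¹ • (Yig q t * Xg q t)) * (q • (Xig q t * Yg q t)) = 1 := by
  rw [smul_mul_assoc, mul_smul_comm, smul_smul, inv_mul_cancel₀ hq, one_smul,
    mul_assoc, x_xi_c, yi_y]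

lemma prodM1 (hq : q ≠ 0) :
    (q • (Yg q t * Xg q t)) * (q⁻¹ • (Xig q t * Yig q t)) = 1 := by
  rw [smul_mul_assoc, mul_smul_comm, smul_smul, mul_inv_cancel₀ hq, one_smul,
    mul_assoc, x_xi_c, y_yi]

lemma prodM2 (hq : q ≠ 0) :
    (q⁻¹ • (Xig q t * Yig q t)) * (q • (Yg q t * Xg q t)) = 1 := by
  rw [smul_mul_assoc, mul_smul_comm, smul_smul, inv_mul_cancel₀ hq, one_smul,
    mul_assoc, yi_y_c, xi_x]

lemma y_eq (hq : q ≠ 0) :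
    Yg q t = (q ^ 2) • (Xig q t * (Yg q t * (Xg q t * (Tg q t * Tg q t)))) := by
  conv_lhs => rw [← xi_x_c q t (Yg q t), xy q t]
  rw [mul_smul_comm]

lemma inv_unique {a b c : DAHA q t} (h1 : c * a = 1) (h2 : a * b = 1) : c = b := by
  calc c = c * (a * b) := by rw [h2, mul_one]
    _ = (c * a) * b := by rw [mul_assoc]
    _ = b := by rw [h1, one_mul]

lemma hs1 (hq : q ≠ 0) : q * (q ^ 2)⁻¹ = q⁻¹ := by field_simp
lemma hs2 (hq : q ≠ 0) : q⁻¹ * q ^ 2 = q := by field_simp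

def mapP : DGen → DAHA q t
  | DGen.X => Xg q t
  | DGen.Xi => Xig q t
  | DGen.Y => q⁻¹ • (Xg q t * Yg q t)
  | DGen.Yi => q • (Yig q t * Xig q t)
  | DGen.T => Tg q t

def mapPi : DGen → DAHA q t
  | DGen.X => Xg q t
  | DGen.Xi => Xig q t
  | DGen.Y => q • (Xig q t * Yg q t)
  | DGen.Yi => q⁻¹ • (Yig q t * Xg q t)
  | DGen.T => Tg q t

def mapM : DGen → DAHA q t
  | DGen.X => q • (Yg q t * Xg q t)
  | DGen.Xi => q⁻¹ • (Xig q t * Yig q t)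
  | DGen.Y => Yg q t
  | DGen.Yi => Yig q t
  | DGen.T => Tg q t

def mapMi : DGen → DAHA q t
  | DGen.X => q⁻¹ • (Yig q t * Xg q t)
  | DGen.Xi => q • (Xig q t * Yg q t)
  | DGen.Y => Yg q t
  | DGen.Yi => Yig q t
  | DGen.T => Tg q t

lemma relP (hq : q ≠ 0) (ht : t ≠ 0) : ∀ ⦃a b⦄, DahaRel q t a b →
    FreeAlgebra.lift ℂ (mapP q t) a = FreeAlgebra.lift ℂ (mapP q t) b := by
  intro a b h
  induction h with
  | XXi => simp only [map_mul, map_one, FreeAlgebra.lift_ι_apply, mapP]; exact x_xi q t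
  | XiX => simp only [map_mul, map_one, FreeAlgebra.lift_ι_apply, mapP]; exact xi_x q t
  | YYi => simp only [map_mul, map_one, FreeAlgebra.lift_ι_apply, mapP]; exact prodP1 q t hq
  | YiY => simp only [map_mul, map_one, FreeAlgebra.lift_ι_apply, mapP]; exact prodP2 q t hq
  | TXT =>
      simp only [map_mul, FreeAlgebra.lift_ι_apply, mapP, mul_assoc]
      exact TxT q t
  | TYiT =>
      simp only [map_mul, FreeAlgebra.lift_ι_apply, mapP]
      simp only [smul_mul_assoc, mul_smul_comm, smul_smul, mul_assoc]
      rw [idA q t hq ht, smul_smul, hs1 q hq]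
  | XY =>
      simp only [map_mul, map_smul, FreeAlgebra.lift_ι_apply, mapP]
      simp only [smul_mul_assoc, mul_smul_comm, smul_smul, mul_assoc]
      rw [xy q t]
      simp only [smul_mul_assoc, mul_smul_comm, smul_smul, mul_assoc]
      congr 1
      ring
  | hecke =>
      simp only [map_mul, map_sub, map_add, map_zero, AlgHom.commutes,
        FreeAlgebra.lift_ι_apply, mapP]
      exact hecke q t

lemma relPi (hq : q ≠ 0) (ht : t ≠ 0) : ∀ ⦃a b⦄, DahaRel q t a b →
    FreeAlgebra.lift ℂ (mapPi q t) a = FreeAlgebra.lift ℂ (mapPi q t) b := by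
  intro a b h
  induction h with
  | XXi => simp only [map_mul, map_one, FreeAlgebra.lift_ι_apply, mapPi]; exact x_xi q t
  | XiX => simp only [map_mul, map_one, FreeAlgebra.lift_ι_apply, mapPi]; exact xi_x q t
  | YYi => simp only [map_mul, map_one, FreeAlgebra.lift_ι_apply, mapPi]; exact prodPi1 q t hq
  | YiY => simp only [map_mul, map_one, FreeAlgebra.lift_ι_apply, mapPi]; exact prodPi2 q t hq
  | TXT =>
      simp only [map_mul, FreeAlgebra.lift_ι_apply, mapPi, mul_assoc]
      exact TxT q t
  | TYiT =>
      simp only [map_mul, FreeAlgebra.lift_ι_apply, mapPi]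
      simp only [smul_mul_assoc, mul_smul_comm, smul_smul, mul_assoc]
      rw [idC q t hq ht, smul_smul, hs2 q hq]
  | XY =>
      simp only [map_mul, map_smul, FreeAlgebra.lift_ι_apply, mapPi]
      simp only [smul_mul_assoc, mul_smul_comm, smul_smul, mul_assoc, x_xi_c]
      conv_lhs => rw [y_eq q t hq]
      simp only [smul_smul]
      congr 1
      ring
  | hecke =>
      simp only [map_mul, map_sub, map_add, map_zero, AlgHom.commutes,
        FreeAlgebra.lift_ι_apply, mapPi]
      exact hecke q t

lemma relM (hq : q ≠ 0) (ht : t ≠ 0) : ∀ ⦃a b⦄, DahaRel q t a b →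
    FreeAlgebra.lift ℂ (mapM q t) a = FreeAlgebra.lift ℂ (mapM q t) b := by
  intro a b h
  induction h with
  | XXi => simp only [map_mul, map_one, FreeAlgebra.lift_ι_apply, mapM]; exact prodM1 q t hq
  | XiX => simp only [map_mul, map_one, FreeAlgebra.lift_ι_apply, mapM]; exact prodM2 q t hq
  | YYi => simp only [map_mul, map_one, FreeAlgebra.lift_ι_apply, mapM]; exact y_yi q t
  | YiY => simp only [map_mul, map_one, FreeAlgebra.lift_ι_apply, mapM]; exact yi_y q t
  | TXT =>
      simp only [map_mul, FreeAlgebra.lift_ι_apply, mapM]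
      simp only [smul_mul_assoc, mul_smul_comm, smul_smul, mul_assoc]
      rw [idB q t hq ht, smul_smul, hs1 q hq]
  | TYiT =>
      simp only [map_mul, FreeAlgebra.lift_ι_apply, mapM, mul_assoc]
      exact TyiT q t
  | XY =>
      simp only [map_mul, map_smul, FreeAlgebra.lift_ι_apply, mapM]
      simp only [smul_mul_assoc, mul_smul_comm, smul_smul, mul_assoc]
      rw [xy q t]
      simp only [smul_mul_assoc, mul_smul_comm, smul_smul, mul_assoc]
      congr 1
      ring
  | hecke =>
      simp only [map_mul, map_sub, map_add, map_zero, AlgHom.commutes,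
        FreeAlgebra.lift_ι_apply, mapM]
      exact hecke q t

lemma relMi (hq : q ≠ 0) (ht : t ≠ 0) : ∀ ⦃a b⦄, DahaRel q t a b →
    FreeAlgebra.lift ℂ (mapMi q t) a = FreeAlgebra.lift ℂ (mapMi q t) b := by
  intro a b h
  induction h with
  | XXi => simp only [map_mul, map_one, FreeAlgebra.lift_ι_apply, mapMi]; exact prodPi2 q t hq
  | XiX => simp only [map_mul, map_one, FreeAlgebra.lift_ι_apply, mapMi]; exact prodPi1 q t hq
  | YYi => simp only [map_mul, map_one, FreeAlgebra.lift_ι_apply, mapMi]; exact y_yi q t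
  | YiY => simp only [map_mul, map_one, FreeAlgebra.lift_ι_apply, mapMi]; exact yi_y q t
  | TXT =>
      simp only [map_mul, FreeAlgebra.lift_ι_apply, mapMi]
      simp only [smul_mul_assoc, mul_smul_comm, smul_smul, mul_assoc]
      rw [idC q t hq ht, smul_smul, hs2 q hq]
  | TYiT =>
      simp only [map_mul, FreeAlgebra.lift_ι_apply, mapMi, mul_assoc]
      exact TyiT q t
  | XY =>
      simp only [map_mul, map_smul, FreeAlgebra.lift_ι_apply, mapMi]
      simp only [smul_mul_assoc, mul_smul_comm, smul_smul, mul_assoc]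
      rw [b1 q t]
      simp only [smul_mul_assoc, mul_smul_comm, smul_smul, mul_assoc, y_yi_c]
      congr 1
      ring
  | hecke =>
      simp only [map_mul, map_sub, map_add, map_zero, AlgHom.commutes,
        FreeAlgebra.lift_ι_apply, mapMi]
      exact hecke q t

def fP (hq : q ≠ 0) (ht : t ≠ 0) : DAHA q t →ₐ[ℂ] DAHA q t :=
  RingQuot.liftAlgHom ℂ ⟨FreeAlgebra.lift ℂ (mapP q t), relP q t hq ht⟩

def fPi (hq : q ≠ 0) (ht : t ≠ 0) : DAHA q t →ₐ[ℂ] DAHA q t :=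
  RingQuot.liftAlgHom ℂ ⟨FreeAlgebra.lift ℂ (mapPi q t), relPi q t hq ht⟩

def fM (hq : q ≠ 0) (ht : t ≠ 0) : DAHA q t →ₐ[ℂ] DAHA q t :=
  RingQuot.liftAlgHom ℂ ⟨FreeAlgebra.lift ℂ (mapM q t), relM q t hq ht⟩

def fMi (hq : q ≠ 0) (ht : t ≠ 0) : DAHA q t →ₐ[ℂ] DAHA q t :=
  RingQuot.liftAlgHom ℂ ⟨FreeAlgebra.lift ℂ (mapMi q t), relMi q t hq ht⟩

variable {q t} (hq : q ≠ 0) (ht : t ≠ 0)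

lemma fP_apply (d : DGen) :
    fP q t hq ht (RingQuot.mkAlgHom ℂ (DahaRel q t) (FreeAlgebra.ι ℂ d)) = mapP q t d := by
  rw [fP, RingQuot.liftAlgHom_mkAlgHom_apply, FreeAlgebra.lift_ι_apply]

lemma fPi_apply (d : DGen) :
    fPi q t hq ht (RingQuot.mkAlgHom ℂ (DahaRel q t) (FreeAlgebra.ι ℂ d)) = mapPi q t d := by
  rw [fPi, RingQuot.liftAlgHom_mkAlgHom_apply, FreeAlgebra.lift_ι_apply]

lemma fM_apply (d : DGen) :
    fM q t hq ht (RingQuot.mkAlgHom ℂ (DahaRel q t) (FreeAlgebra.ι ℂ d)) = mapM q t d := by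
  rw [fM, RingQuot.liftAlgHom_mkAlgHom_apply, FreeAlgebra.lift_ι_apply]

lemma fMi_apply (d : DGen) :
    fMi q t hq ht (RingQuot.mkAlgHom ℂ (DahaRel q t) (FreeAlgebra.ι ℂ d)) = mapMi q t d := by
  rw [fMi, RingQuot.liftAlgHom_mkAlgHom_apply, FreeAlgebra.lift_ι_apply]

lemma algHom_ext {f g : DAHA q t →ₐ[ℂ] DAHA q t}
    (hX : f (Xg q t) = g (Xg q t)) (hXi : f (Xig q t) = g (Xig q t))
    (hY : f (Yg q t) = g (Yg q t)) (hYi : f (Yig q t) = g (Yig q t))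
    (hT : f (Tg q t) = g (Tg q t)) : f = g := by
  apply RingQuot.ringQuot_ext'
  apply FreeAlgebra.hom_ext
  funext d
  cases d
  · exact hX
  · exact hXi
  · exact hY
  · exact hYi
  · exact hT

lemma fP_X : fP q t hq ht (Xg q t) = Xg q t := fP_apply hq ht DGen.X
lemma fP_Xi : fP q t hq ht (Xig q t) = Xig q t := fP_apply hq ht DGen.Xi
lemma fP_Y : fP q t hq ht (Yg q t) = q⁻¹ • (Xg q t * Yg q t) := fP_apply hq ht DGen.Y
lemma fP_Yi : fP q t hq ht (Yig q t) = q • (Yig q t * Xig q t) := fP_apply hq ht DGen.Yi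
lemma fP_T : fP q t hq ht (Tg q t) = Tg q t := fP_apply hq ht DGen.T
lemma fPi_X : fPi q t hq ht (Xg q t) = Xg q t := fPi_apply hq ht DGen.X
lemma fPi_Xi : fPi q t hq ht (Xig q t) = Xig q t := fPi_apply hq ht DGen.Xi
lemma fPi_Y : fPi q t hq ht (Yg q t) = q • (Xig q t * Yg q t) := fPi_apply hq ht DGen.Y
lemma fPi_Yi : fPi q t hq ht (Yig q t) = q⁻¹ • (Yig q t * Xg q t) := fPi_apply hq ht DGen.Yi
lemma fPi_T : fPi q t hq ht (Tg q t) = Tg q t := fPi_apply hq ht DGen.T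
lemma fM_X : fM q t hq ht (Xg q t) = q • (Yg q t * Xg q t) := fM_apply hq ht DGen.X
lemma fM_Xi : fM q t hq ht (Xig q t) = q⁻¹ • (Xig q t * Yig q t) := fM_apply hq ht DGen.Xi
lemma fM_Y : fM q t hq ht (Yg q t) = Yg q t := fM_apply hq ht DGen.Y
lemma fM_Yi : fM q t hq ht (Yig q t) = Yig q t := fM_apply hq ht DGen.Yi
lemma fM_T : fM q t hq ht (Tg q t) = Tg q t := fM_apply hq ht DGen.T
lemma fMi_X : fMi q t hq ht (Xg q t) = q⁻¹ • (Yig q t * Xg q t) := fMi_apply hq ht DGen.X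
lemma fMi_Xi : fMi q t hq ht (Xig q t) = q • (Xig q t * Yg q t) := fMi_apply hq ht DGen.Xi
lemma fMi_Y : fMi q t hq ht (Yg q t) = Yg q t := fMi_apply hq ht DGen.Y
lemma fMi_Yi : fMi q t hq ht (Yig q t) = Yig q t := fMi_apply hq ht DGen.Yi
lemma fMi_T : fMi q t hq ht (Tg q t) = Tg q t := fMi_apply hq ht DGen.T

lemma fP_comp_fPi : (fP q t hq ht).comp (fPi q t hq ht) = AlgHom.id ℂ (DAHA q t) := by
  apply algHom_ext <;>
    simp only [AlgHom.coe_comp, Function.comp_apply, AlgHom.id_apply,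
      fPi_X, fPi_Xi, fPi_Y, fPi_Yi, fPi_T, map_smul, map_mul,
      fP_X, fP_Xi, fP_Y, fP_Yi, fP_T]
  · rw [mul_smul_comm, smul_smul, mul_inv_cancel₀ hq, one_smul, xi_x_c]
  · rw [smul_mul_assoc, smul_smul, inv_mul_cancel₀ hq, one_smul, mul_assoc, xi_x, mul_one]

lemma fPi_comp_fP : (fPi q t hq ht).comp (fP q t hq ht) = AlgHom.id ℂ (DAHA q t) := by
  apply algHom_ext <;>
    simp only [AlgHom.coe_comp, Function.comp_apply, AlgHom.id_apply,
      fPi_X, fPi_Xi, fPi_Y, fPi_Yi, fPi_T, map_smul, map_mul,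
      fP_X, fP_Xi, fP_Y, fP_Yi, fP_T]
  · rw [mul_smul_comm, smul_smul, inv_mul_cancel₀ hq, one_smul, x_xi_c]
  · rw [smul_mul_assoc, smul_smul, mul_inv_cancel₀ hq, one_smul, mul_assoc, x_xi, mul_one]

lemma fM_comp_fMi : (fM q t hq ht).comp (fMi q t hq ht) = AlgHom.id ℂ (DAHA q t) := by
  apply algHom_ext <;>
    simp only [AlgHom.coe_comp, Function.comp_apply, AlgHom.id_apply,
      fMi_X, fMi_Xi, fMi_Y, fMi_Yi, fMi_T, map_smul, map_mul,
      fM_X, fM_Xi, fM_Y, fM_Yi, fM_T]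
  · rw [mul_smul_comm, smul_smul, inv_mul_cancel₀ hq, one_smul, yi_y_c]
  · rw [smul_mul_assoc, smul_smul, mul_inv_cancel₀ hq, one_smul, mul_assoc, yi_y, mul_one]

lemma fMi_comp_fM : (fMi q t hq ht).comp (fM q t hq ht) = AlgHom.id ℂ (DAHA q t) := by
  apply algHom_ext <;>
    simp only [AlgHom.coe_comp, Function.comp_apply, AlgHom.id_apply,
      fMi_X, fMi_Xi, fMi_Y, fMi_Yi, fMi_T, map_smul, map_mul,
      fM_X, fM_Xi, fM_Y, fM_Yi, fM_T]
  · rw [mul_smul_comm, smul_smul, mul_inv_cancel₀ hq, one_smul, y_yi_c]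
  · rw [smul_mul_assoc, smul_smul, inv_mul_cancel₀ hq, one_smul, mul_assoc, y_yi, mul_one]

def τP : DAHA q t ≃ₐ[ℂ] DAHA q t :=
  AlgEquiv.ofAlgHom (fP q t hq ht) (fPi q t hq ht) (fP_comp_fPi hq ht) (fPi_comp_fP hq ht)

def τM : DAHA q t ≃ₐ[ℂ] DAHA q t :=
  AlgEquiv.ofAlgHom (fM q t hq ht) (fMi q t hq ht) (fM_comp_fMi hq ht) (fMi_comp_fM hq ht)

end DahaAux

open DahaAux in
/-- The assignments `τ⁺(X) = X`, `τ⁺(T) = T`, `τ⁺(Y) = q⁻¹XY` and `τ⁻(X) = qYX`,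
`τ⁻(T) = T`, `τ⁻(Y) = Y` extend uniquely to ℂ-algebra automorphisms of `H_{q,t}`. -/
theorem daha_tau_automorphisms (q t : ℂ) (hq : q ≠ 0) (ht : t ≠ 0) :
    (∃! τp : DAHA q t ≃ₐ[ℂ] DAHA q t,
      τp (Xg q t) = Xg q t ∧ τp (Tg q t) = Tg q t ∧
        τp (Yg q t) = q⁻¹ • (Xg q t * Yg q t)) ∧
    (∃! τm : DAHA q t ≃ₐ[ℂ] DAHA q t,
      τm (Xg q t) = q • (Yg q t * Xg q t) ∧ τm (Tg q t) = Tg q t ∧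
        τm (Yg q t) = Yg q t) := by
  constructor
  · refine ⟨τP hq ht, ⟨fP_X hq ht, fP_T hq ht, fP_Y hq ht⟩, ?_⟩
    rintro τ ⟨hX, hT, hY⟩
    have hXi : τ (Xig q t) = Xig q t := by
      refine inv_unique q t (a := Xg q t) ?_ (x_xi q t)
      rw [← hX, ← map_mul, xi_x, map_one]
    have hYi : τ (Yig q t) = q • (Yig q t * Xig q t) := by
      refine inv_unique q t (a := q⁻¹ • (Xg q t * Yg q t)) ?_ (prodP1 q t hq)
      rw [← hY, ← map_mul, yi_y, map_one]
    exact AlgEquiv.coe_algHom_injective (algHom_ext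
      (hX.trans (fP_X hq ht).symm) (hXi.trans (fP_Xi hq ht).symm)
      (hY.trans (fP_Y hq ht).symm) (hYi.trans (fP_Yi hq ht).symm)
      (hT.trans (fP_T hq ht).symm))
  · refine ⟨τM hq ht, ⟨fM_X hq ht, fM_T hq ht, fM_Y hq ht⟩, ?_⟩
    rintro τ ⟨hX, hT, hY⟩
    have hXi : τ (Xig q t) = q⁻¹ • (Xig q t * Yig q t) := by
      refine inv_unique q t (a := q • (Yg q t * Xg q t)) ?_ (prodM1 q t hq)
      rw [← hX, ← map_mul, xi_x, map_one]
    have hYi : τ (Yig q t) = Yig q t := by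
      refine inv_unique q t (a := Yg q t) ?_ (y_yi q t)
      rw [← hY, ← map_mul, yi_y, map_one]
    exact AlgEquiv.coe_algHom_injective (algHom_ext
      (hX.trans (fM_X hq ht).symm) (hXi.trans (fM_Xi hq ht).symm)
      (hY.trans (fM_Y hq ht).symm) (hYi.trans (fM_Yi hq ht).symm)
      (hT.trans (fM_T hq ht).symm))
end
end

section
/- Assume t² ≠ −1. Since τ⁺(T) = τ⁻(T) = T, the automorphisms τ⁺ and τ⁻ of H_{q,t} fix the idempotent e and restrict to automorphisms of SH_{q,t}. Let Θ : B'_q → SH_{q,t} be the ℂ-algebra homomorphism with Θ(x) = (X + X⁻¹)·e, Θ(y) = (Y + Y⁻¹)·e, Θ(z) = q⁻¹·(X·Y·T⁻² + X⁻¹·Y⁻¹)·e. Then Θ ∘ τ⁺ = τ⁺ ∘ Θ and Θ ∘ τ⁻ = τ⁻ ∘ Θ, where τ± on the source are the automorphisms of B'_q with τ⁺(x) = x, τ⁺(y) = z, τ⁺(z) = q⁻¹·x·z − q⁻²·y and τ⁻(x) = z, τ⁻(y) = y, τ⁻(z) = q⁻¹·z·y − q⁻²·x. -/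
noncomputable section

lemma mul_cancel_left {A : Type*} [Monoid A] {a b : A} (h : a * b = 1) (r : A) :
    a * (b * r) = r := by rw [← mul_assoc, h, one_mul]

section daha
variable (q t : ℂ)

lemma rXXi : Xg q t * Xig q t = 1 := by
  have h := RingQuot.mkAlgHom_rel ℂ (DahaRel.XXi (q := q) (t := t))
  rw [map_mul, map_one] at h; exact h

lemma rXiX : Xig q t * Xg q t = 1 := by
  have h := RingQuot.mkAlgHom_rel ℂ (DahaRel.XiX (q := q) (t := t))
  rw [map_mul, map_one] at h; exact h

lemma rYYi : Yg q t * Yig q t = 1 := by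
  have h := RingQuot.mkAlgHom_rel ℂ (DahaRel.YYi (q := q) (t := t))
  rw [map_mul, map_one] at h; exact h

lemma rYiY : Yig q t * Yg q t = 1 := by
  have h := RingQuot.mkAlgHom_rel ℂ (DahaRel.YiY (q := q) (t := t))
  rw [map_mul, map_one] at h; exact h

lemma rTXT : Tg q t * Xg q t * Tg q t = Xig q t := by
  have h := RingQuot.mkAlgHom_rel ℂ (DahaRel.TXT (q := q) (t := t))
  rw [map_mul, map_mul] at h; exact h

lemma rTYiT : Tg q t * Yig q t * Tg q t = Yg q t := by
  have h := RingQuot.mkAlgHom_rel ℂ (DahaRel.TYiT (q := q) (t := t))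
  rw [map_mul, map_mul] at h; exact h

lemma rXY : Xg q t * Yg q t = (q ^ 2) • (Yg q t * Xg q t * Tg q t * Tg q t) := by
  have h := RingQuot.mkAlgHom_rel ℂ (DahaRel.XY (q := q) (t := t))
  rw [map_mul, map_smul, map_mul, map_mul, map_mul] at h; exact h

lemma rHecke :
    (Tg q t - algebraMap ℂ (DAHA q t) t) * (Tg q t + algebraMap ℂ (DAHA q t) t⁻¹) = 0 := by
  have h := RingQuot.mkAlgHom_rel ℂ (DahaRel.hecke (q := q) (t := t))
  rw [map_mul, map_sub, map_add, map_zero, AlgHom.commutes, AlgHom.commutes] at h; exact h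

lemma dTT (ht : t ≠ 0) : Tg q t * Tg q t = (t - t⁻¹) • Tg q t + 1 := by
  have h := rHecke q t
  have h1 : Tg q t * algebraMap ℂ (DAHA q t) t⁻¹ = t⁻¹ • Tg q t := by
    rw [Algebra.smul_def, Algebra.commutes]
  have h2 : algebraMap ℂ (DAHA q t) t * Tg q t = t • Tg q t := (Algebra.smul_def _ _).symm
  have h3 : algebraMap ℂ (DAHA q t) t * algebraMap ℂ (DAHA q t) t⁻¹ = 1 := by
    rw [← map_mul, mul_inv_cancel₀ ht, map_one]
  rw [sub_mul, mul_add, mul_add, h1, h2, h3] at h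
  have h4 := sub_eq_zero.mp h
  have h5 : Tg q t * Tg q t = t • Tg q t + 1 - t⁻¹ • Tg q t := by
    rw [eq_sub_iff_add_eq, h4]
  rw [h5]; module

lemma dTTinv (ht : t ≠ 0) : Tg q t * Tinv q t = 1 := by
  have h1 : Tg q t * algebraMap ℂ (DAHA q t) t⁻¹ = t⁻¹ • Tg q t := by
    rw [Algebra.smul_def, Algebra.commutes]
  have h2 : Tg q t * algebraMap ℂ (DAHA q t) t = t • Tg q t := by
    rw [Algebra.smul_def, Algebra.commutes]
  rw [Tinv, mul_sub, mul_add, dTT q t ht, h1, h2]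
  module

lemma dTinvT (ht : t ≠ 0) : Tinv q t * Tg q t = 1 := by
  have h1 : algebraMap ℂ (DAHA q t) t⁻¹ * Tg q t = t⁻¹ • Tg q t := (Algebra.smul_def _ _).symm
  have h2 : algebraMap ℂ (DAHA q t) t * Tg q t = t • Tg q t := (Algebra.smul_def _ _).symm
  rw [Tinv, sub_mul, add_mul, dTT q t ht, h1, h2]
  module

lemma mTinv (r : DAHA q t) : Tinv q t * r = Tg q t * r + (t⁻¹ - t) • r := by
  rw [Tinv, sub_mul, add_mul, Algebra.smul_def (t⁻¹ - t), map_sub, sub_mul,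
    add_sub_assoc]

lemma mXx (r : DAHA q t) : Xg q t * (Xig q t * r) = r := mul_cancel_left (rXXi q t) r
lemma mxX (r : DAHA q t) : Xig q t * (Xg q t * r) = r := mul_cancel_left (rXiX q t) r
lemma mYy (r : DAHA q t) : Yg q t * (Yig q t * r) = r := mul_cancel_left (rYYi q t) r
lemma myY (r : DAHA q t) : Yig q t * (Yg q t * r) = r := mul_cancel_left (rYiY q t) r

lemma mTT (ht : t ≠ 0) (r : DAHA q t) :
    Tg q t * (Tg q t * r) = (t - t⁻¹) • (Tg q t * r) + r := by
  rw [← mul_assoc, dTT q t ht, add_mul, smul_mul_assoc, one_mul]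

lemma dTX (ht : t ≠ 0) : Tg q t * Xg q t = Xig q t * Tinv q t := by
  calc Tg q t * Xg q t = Tg q t * Xg q t * (Tg q t * Tinv q t) := by
        rw [dTTinv q t ht, mul_one]
    _ = (Tg q t * Xg q t * Tg q t) * Tinv q t := by rw [← mul_assoc]
    _ = Xig q t * Tinv q t := by rw [rTXT]

lemma mTX (ht : t ≠ 0) (r : DAHA q t) :
    Tg q t * (Xg q t * r) = Xig q t * (Tg q t * r) + (t⁻¹ - t) • (Xig q t * r) := by
  rw [← mul_assoc, dTX q t ht, mul_assoc, mTinv, mul_add, mul_smul_comm, ← mul_assoc]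

lemma dTXi (ht : t ≠ 0) : Tg q t * Xig q t = Xg q t * Tg q t + (t - t⁻¹) • Xig q t := by
  have h : Tg q t * Xig q t = (Tg q t * Tg q t) * (Xg q t * Tg q t) := by
    rw [← rTXT]; simp only [mul_assoc]
  rw [h, dTT q t ht, add_mul, smul_mul_assoc, one_mul, ← mul_assoc, rTXT, add_comm]

lemma mTx (ht : t ≠ 0) (r : DAHA q t) :
    Tg q t * (Xig q t * r) = Xg q t * (Tg q t * r) + (t - t⁻¹) • (Xig q t * r) := by
  rw [← mul_assoc, dTXi q t ht, add_mul, smul_mul_assoc, mul_assoc]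

lemma dTYi (ht : t ≠ 0) : Tg q t * Yig q t = Yg q t * Tinv q t := by
  calc Tg q t * Yig q t = Tg q t * Yig q t * (Tg q t * Tinv q t) := by
        rw [dTTinv q t ht, mul_one]
    _ = (Tg q t * Yig q t * Tg q t) * Tinv q t := by rw [← mul_assoc]
    _ = Yg q t * Tinv q t := by rw [rTYiT]

lemma mTy (ht : t ≠ 0) (r : DAHA q t) :
    Tg q t * (Yig q t * r) = Yg q t * (Tg q t * r) + (t⁻¹ - t) • (Yg q t * r) := by
  rw [← mul_assoc, dTYi q t ht, mul_assoc, mTinv, mul_add, mul_smul_comm, ← mul_assoc]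

lemma dTY (ht : t ≠ 0) : Tg q t * Yg q t = Yig q t * Tg q t + (t - t⁻¹) • Yg q t := by
  have h : Tg q t * Yg q t = (Tg q t * Tg q t) * (Yig q t * Tg q t) := by
    rw [← rTYiT]; simp only [mul_assoc]
  rw [h, dTT q t ht, add_mul, smul_mul_assoc, one_mul, ← mul_assoc, rTYiT, add_comm]

lemma mTY (ht : t ≠ 0) (r : DAHA q t) :
    Tg q t * (Yg q t * r) = Yig q t * (Tg q t * r) + (t - t⁻¹) • (Yg q t * r) := by
  rw [← mul_assoc, dTY q t ht, add_mul, smul_mul_assoc, mul_assoc]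
end daha

section daha2
variable (q t : ℂ)

lemma dXYTinv2 (ht : t ≠ 0) :
    Xg q t * (Yg q t * (Tinv q t * Tinv q t)) = (q ^ 2) • (Yg q t * Xg q t) := by
  rw [← mul_assoc, rXY, smul_mul_assoc]
  congr 1
  simp only [mul_assoc]
  rw [mul_cancel_left (dTTinv q t ht), dTTinv q t ht, mul_one]

lemma dYX (hq : q ≠ 0) (ht : t ≠ 0) :
    Yg q t * Xg q t = (q ^ 2)⁻¹ • (Xg q t * (Yg q t * (Tinv q t * Tinv q t))) := by
  rw [dXYTinv2 q t ht, smul_smul, inv_mul_cancel₀ (pow_ne_zero 2 hq), one_smul]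

lemma mYX (hq : q ≠ 0) (ht : t ≠ 0) (r : DAHA q t) :
    Yg q t * (Xg q t * r) =
      (q ^ 2)⁻¹ • (Xg q t * (Yg q t * (Tinv q t * (Tinv q t * r)))) := by
  rw [← mul_assoc, dYX q t hq ht, smul_mul_assoc]; simp only [mul_assoc]

lemma dYiX (ht : t ≠ 0) :
    Yig q t * Xg q t = (q ^ 2) • (Xg q t * (Tg q t * (Tg q t * Yig q t))) := by
  have h1 : Yig q t * (Xg q t * Yg q t) = (q ^ 2) • (Xg q t * (Tg q t * Tg q t)) := by
    rw [rXY, mul_smul_comm]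
    congr 1
    simp only [mul_assoc]
    rw [myY]
  have h2 : Yig q t * Xg q t = (Yig q t * (Xg q t * Yg q t)) * Yig q t := by
    simp only [mul_assoc]
    rw [rYYi, mul_one]
  rw [h2, h1, smul_mul_assoc]
  simp only [mul_assoc]

lemma mYiX (ht : t ≠ 0) (r : DAHA q t) :
    Yig q t * (Xg q t * r) = (q ^ 2) • (Xg q t * (Tg q t * (Tg q t * (Yig q t * r)))) := by
  rw [← mul_assoc, dYiX q t ht, smul_mul_assoc]; simp only [mul_assoc]

lemma dTinvXi (ht : t ≠ 0) : Tinv q t * Xig q t = Xg q t * Tg q t := by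
  rw [← rTXT, ← mul_assoc, ← mul_assoc, dTinvT q t ht, one_mul]

lemma dTinv2Xi (ht : t ≠ 0) :
    Tinv q t * (Tinv q t * Xig q t) = Xig q t + (t⁻¹ - t) • (Xg q t * Tg q t) := by
  rw [dTinvXi q t ht, mTinv, ← mul_assoc, rTXT]

lemma dYTinv2 (ht : t ≠ 0) :
    Yg q t * (Tinv q t * Tinv q t) = (q ^ 2) • (Xig q t * (Yg q t * Xg q t)) := by
  have h := congrArg (fun z => Xig q t * z) (dXYTinv2 q t ht)
  simp only [mxX, mul_smul_comm] at h
  exact h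

lemma dYXi (ht : t ≠ 0) :
    Yg q t * Xig q t =
      (q ^ 2) • (Xig q t * Yg q t) - (t⁻¹ - t) • (Yg q t * (Xg q t * Tg q t)) := by
  have h := congrArg (fun z => z * Xig q t) (dYTinv2 q t ht)
  simp only [smul_mul_assoc, mul_assoc] at h
  rw [rXXi, mul_one, dTinv2Xi q t ht, mul_add, mul_smul_comm] at h
  exact eq_sub_of_add_eq h

lemma mYx (ht : t ≠ 0) (r : DAHA q t) :
    Yg q t * (Xig q t * r) =
      (q ^ 2) • (Xig q t * (Yg q t * r)) -
        (t⁻¹ - t) • (Yg q t * (Xg q t * (Tg q t * r))) := by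
  rw [← mul_assoc, dYXi q t ht, sub_mul, smul_mul_assoc, smul_mul_assoc]
  simp only [mul_assoc]

lemma dYiXi (hq : q ≠ 0) (ht : t ≠ 0) :
    Yig q t * Xig q t = (q ^ 2)⁻¹ • (Tinv q t * (Tinv q t * (Xig q t * Yig q t))) := by
  have h1 := congrArg (fun z => Yig q t * z) (dYTinv2 q t ht)
  simp only [myY, mul_smul_comm] at h1
  -- h1 : Tinv*Tinv = q^2 • (Yi*(Xi*(Y*X)))
  have h2 := congrArg (fun z => z * Xig q t) h1
  simp only [smul_mul_assoc, mul_assoc] at h2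
  rw [rXXi, mul_one] at h2
  have h3 := congrArg (fun z => z * Yig q t) h2
  simp only [smul_mul_assoc, mul_assoc] at h3
  rw [rYYi, mul_one] at h3
  -- h3 : Tinv*(Tinv*(Xi*Yi)) = q^2 • (Yi*Xi)
  have h4 := congrArg (fun z => (q ^ 2 : ℂ)⁻¹ • z) h3
  simp only [smul_smul, inv_mul_cancel₀ (pow_ne_zero 2 hq), one_smul] at h4
  exact h4.symm

lemma myx (hq : q ≠ 0) (ht : t ≠ 0) (r : DAHA q t) :
    Yig q t * (Xig q t * r) =
      (q ^ 2)⁻¹ • (Tinv q t * (Tinv q t * (Xig q t * (Yig q t * r)))) := by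
  rw [← mul_assoc, dYiXi q t hq ht, smul_mul_assoc]
  simp only [mul_assoc]

lemma httne (ht : t ≠ 0) (ht2 : t ^ 2 ≠ -1) : t + t⁻¹ ≠ 0 := by
  intro h
  apply ht2
  have h1 : t * (t + t⁻¹) = 0 := by rw [h, mul_zero]
  rw [mul_add, mul_inv_cancel₀ ht] at h1
  linear_combination h1

lemma mTe (ht : t ≠ 0) (ht2 : t ^ 2 ≠ -1) : Tg q t * idem q t = t • idem q t := by
  have h1 : (1 : ℂ) + t ^ 2 ≠ 0 := fun h => ht2 (by linear_combination h)
  have h2 : t + t ^ 3 ≠ 0 := by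
    have h3 : t + t ^ 3 = t * (1 + t ^ 2) := by ring
    rw [h3]; exact mul_ne_zero ht h1
  simp only [idem, Algebra.algebraMap_eq_smul_one, mul_smul_comm, mul_add,
    dTT q t ht, mul_one]
  match_scalars
  · field_simp
    ring
  · have hA : t * t + 1 ≠ 0 := fun h => h1 (by linear_combination h)
    field_simp

lemma me (r : DAHA q t) :
    idem q t * r = (t + t⁻¹)⁻¹ • (Tg q t * r) + ((t + t⁻¹)⁻¹ * t⁻¹) • r := by
  simp only [idem, Algebra.algebraMap_eq_smul_one, smul_mul_assoc, add_mul, one_mul,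
    smul_add, smul_smul]

end daha2

set_option maxHeartbeats 4000000

/-- The automorphisms `τ±` of `H_{q,t}` fix the idempotent `e` and restrict to automorphisms
of the spherical subalgebra `SH_{q,t} = e·H_{q,t}·e`, and the homomorphism
`Θ : B'_q → SH_{q,t}` with `Θ(x) = (X+X⁻¹)e`, `Θ(y) = (Y+Y⁻¹)e`,
`Θ(z) = q⁻¹(XYT⁻² + X⁻¹Y⁻¹)e` intertwines the `τ±` of `B'_q` with the `τ±` of `H_{q,t}`. -/
theorem tau_intertwine (q t : ℂ) (hq : q ≠ 0) (ht : t ≠ 0) (ht2 : t ^ 2 ≠ -1)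
    (τp τm : DAHA q t ≃ₐ[ℂ] DAHA q t)
    (hτpX : τp (Xg q t) = Xg q t) (hτpT : τp (Tg q t) = Tg q t)
    (hτpY : τp (Yg q t) = q⁻¹ • (Xg q t * Yg q t))
    (hτmX : τm (Xg q t) = q • (Yg q t * Xg q t)) (hτmT : τm (Tg q t) = Tg q t)
    (hτmY : τm (Yg q t) = Yg q t)
    (Θ : Bq q →ₙₐ[ℂ] DAHA q t)
    (hΘ1 : Θ 1 = idem q t)
    (hΘx : Θ (xg q) = (Xg q t + Xig q t) * idem q t)
    (hΘy : Θ (yg q) = (Yg q t + Yig q t) * idem q t)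
    (hΘz : Θ (zg q) = q⁻¹ • ((Xg q t * Yg q t * (Tinv q t * Tinv q t) +
      Xig q t * Yig q t) * idem q t))
    (τpB τmB : Bq q ≃ₐ[ℂ] Bq q)
    (hτpBx : τpB (xg q) = xg q) (hτpBy : τpB (yg q) = zg q)
    (hτpBz : τpB (zg q) = q⁻¹ • (xg q * zg q) - q ^ (-2 : ℤ) • yg q)
    (hτmBx : τmB (xg q) = zg q) (hτmBy : τmB (yg q) = yg q)
    (hτmBz : τmB (zg q) = q⁻¹ • (zg q * yg q) - q ^ (-2 : ℤ) • xg q) :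
    τp (idem q t) = idem q t ∧ τm (idem q t) = idem q t ∧
    (∀ h : DAHA q t, ∃ h' : DAHA q t,
      τp (idem q t * h * idem q t) = idem q t * h' * idem q t) ∧
    (∀ h : DAHA q t, ∃ h' : DAHA q t,
      τm (idem q t * h * idem q t) = idem q t * h' * idem q t) ∧
    (∀ b : Bq q, Θ (τpB b) = τp (Θ b)) ∧
    (∀ b : Bq q, Θ (τmB b) = τm (Θ b)) := by
  have hpe : τp (idem q t) = idem q t := by
    simp only [idem, map_smul, map_add, AlgEquiv.commutes, hτpT]
  have hme : τm (idem q t) = idem q t := by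
    simp only [idem, map_smul, map_add, AlgEquiv.commutes, hτmT]
  have hpXi : τp (Xig q t) = Xig q t := by
    have h1 : τp (Xig q t) * Xg q t = 1 := by
      rw [← hτpX, ← map_mul, rXiX, map_one]
    calc τp (Xig q t) = τp (Xig q t) * (Xg q t * Xig q t) := by rw [rXXi, mul_one]
      _ = τp (Xig q t) * Xg q t * Xig q t := by rw [← mul_assoc]
      _ = Xig q t := by rw [h1, one_mul]
  have hpYi : τp (Yig q t) = q • (Yig q t * Xig q t) := by
    have h1 : τp (Yig q t) * τp (Yg q t) = 1 := by rw [← map_mul, rYiY, map_one]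
    have h2 : τp (Yg q t) * (q • (Yig q t * Xig q t)) = 1 := by
      rw [hτpY, smul_mul_assoc, mul_smul_comm, smul_smul, inv_mul_cancel₀ hq, one_smul,
        mul_assoc, mYy, rXXi]
    calc τp (Yig q t)
        = τp (Yig q t) * (τp (Yg q t) * (q • (Yig q t * Xig q t))) := by rw [h2, mul_one]
      _ = τp (Yig q t) * τp (Yg q t) * (q • (Yig q t * Xig q t)) := by rw [← mul_assoc]
      _ = q • (Yig q t * Xig q t) := by rw [h1, one_mul]
  have hmXi : τm (Xig q t) = q⁻¹ • (Xig q t * Yig q t) := by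
    have h1 : τm (Xig q t) * τm (Xg q t) = 1 := by rw [← map_mul, rXiX, map_one]
    have h2 : τm (Xg q t) * (q⁻¹ • (Xig q t * Yig q t)) = 1 := by
      rw [hτmX, smul_mul_assoc, mul_smul_comm, smul_smul, mul_inv_cancel₀ hq, one_smul,
        mul_assoc, mXx, rYYi]
    calc τm (Xig q t)
        = τm (Xig q t) * (τm (Xg q t) * (q⁻¹ • (Xig q t * Yig q t))) := by rw [h2, mul_one]
      _ = τm (Xig q t) * τm (Xg q t) * (q⁻¹ • (Xig q t * Yig q t)) := by rw [← mul_assoc]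
      _ = q⁻¹ • (Xig q t * Yig q t) := by rw [h1, one_mul]
  have hmYi : τm (Yig q t) = Yig q t := by
    have h1 : τm (Yig q t) * Yg q t = 1 := by
      rw [← hτmY, ← map_mul, rYiY, map_one]
    calc τm (Yig q t) = τm (Yig q t) * (Yg q t * Yig q t) := by rw [rYYi, mul_one]
      _ = τm (Yig q t) * Yg q t * Yig q t := by rw [← mul_assoc]
      _ = Yig q t := by rw [h1, one_mul]
  have hpTinv : τp (Tinv q t) = Tinv q t := by
    simp only [Tinv, map_sub, map_add, AlgEquiv.commutes, hτpT]
  have hmTinv : τm (Tinv q t) = Tinv q t := by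
    simp only [Tinv, map_sub, map_add, AlgEquiv.commutes, hτmT]
  have hq2 : (q : ℂ) ^ (-2 : ℤ) = (q ^ 2)⁻¹ := by
    rw [zpow_neg]
    norm_cast
  have h1t2 : (1 : ℂ) + t ^ 2 ≠ 0 := fun h => ht2 (by linear_combination h)
  have httn : t + t⁻¹ ≠ 0 := httne t ht ht2
  have hq2' : q ^ 2 ≠ 0 := pow_ne_zero 2 hq
  have hA : t * q ^ 2 + t ^ 3 * q ^ 2 ≠ 0 := by
    have h : t * q ^ 2 + t ^ 3 * q ^ 2 = (1 + t ^ 2) * (t * q ^ 2) := by ring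
    rw [h]; exact mul_ne_zero h1t2 (mul_ne_zero ht hq2')
  have hB : t ^ 3 * q ^ 2 + t ^ 5 * q ^ 2 ≠ 0 := by
    have h : t ^ 3 * q ^ 2 + t ^ 5 * q ^ 2 = (1 + t ^ 2) * (t ^ 3 * q ^ 2) := by ring
    rw [h]; exact mul_ne_zero h1t2 (mul_ne_zero (pow_ne_zero 3 ht) hq2')
  have hC : t ^ 2 * q ^ 2 + t ^ 4 * q ^ 2 ≠ 0 := by
    have h : t ^ 2 * q ^ 2 + t ^ 4 * q ^ 2 = (1 + t ^ 2) * (t ^ 2 * q ^ 2) := by ring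
    rw [h]; exact mul_ne_zero h1t2 (mul_ne_zero (pow_ne_zero 2 ht) hq2')
  have hD : t ^ 2 * q ^ 2 + q ^ 2 ≠ 0 := by
    have h : t ^ 2 * q ^ 2 + q ^ 2 = (1 + t ^ 2) * q ^ 2 := by ring
    rw [h]; exact mul_ne_zero h1t2 hq2'
  have keyp : ∀ b : Bq q, Θ (τpB b) = τp (Θ b) := by
    intro b
    obtain ⟨f, rfl⟩ := RingQuot.mkAlgHom_surjective ℂ (BRel q) b
    induction f using FreeAlgebra.induction with
    | grade0 r =>
        simp only [AlgHom.commutes, AlgEquiv.commutes, Algebra.algebraMap_eq_smul_one,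
          map_smul, map_one, hΘ1, hpe]
    | grade1 g =>
        cases g with
        | x =>
          show Θ (τpB (xg q)) = τp (Θ (xg q))
          rw [hτpBx, hΘx, map_mul, map_add, hτpX, hpXi, hpe]
        | y =>
          show Θ (τpB (yg q)) = τp (Θ (yg q))
          rw [hτpBy, hΘz, hΘy, map_mul, map_add, hτpY, hpYi, hpe]
          simp only [mTinv, mXx, mxX, mYy, myY, mTT q t ht, mTX q t ht, mTx q t ht,
            mTY q t ht, mTy q t ht, mYX q t hq ht, mYiX q t ht, mYx q t ht,
            myx q t hq ht, mTe q t ht ht2, me, mul_assoc, smul_mul_assoc, mul_smul_comm,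
            smul_smul, smul_add, smul_sub, add_mul, sub_mul, mul_add, mul_sub,
            mul_one, one_mul]
          match_scalars
          all_goals (try ring)
          all_goals (try (field_simp [httn, h1t2]; ring))
          all_goals ((try ring_nf); field_simp [httn, h1t2, hA, hB, hC, hD]; try ring)
        | z =>
          show Θ (τpB (zg q)) = τp (Θ (zg q))
          rw [hτpBz, hq2]
          simp only [map_sub, map_smul, map_mul, map_add, hΘx, hΘy, hΘz, hτpX, hτpY,
            hpXi, hpYi, hpTinv, hpe]
          simp only [mTinv, mXx, mxX, mYy, myY, mTT q t ht, mTX q t ht, mTx q t ht,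
            mTY q t ht, mTy q t ht, mYX q t hq ht, mYiX q t ht, mYx q t ht,
            myx q t hq ht, mTe q t ht ht2, me, mul_assoc, smul_mul_assoc, mul_smul_comm,
            smul_smul, smul_add, smul_sub, add_mul, sub_mul, mul_add, mul_sub,
            mul_one, one_mul]
          match_scalars
          all_goals (try ring)
          all_goals (try (field_simp [httn, h1t2]; ring))
          all_goals ((try ring_nf); field_simp [httn, h1t2, hA, hB, hC, hD]; try ring)
    | mul a b ha hb => simp only [map_mul, ha, hb]
    | add a b ha hb => simp only [map_add, ha, hb]
  have keym : ∀ b : Bq q, Θ (τmB b) = τm (Θ b) := by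
    intro b
    obtain ⟨f, rfl⟩ := RingQuot.mkAlgHom_surjective ℂ (BRel q) b
    induction f using FreeAlgebra.induction with
    | grade0 r =>
        simp only [AlgHom.commutes, AlgEquiv.commutes, Algebra.algebraMap_eq_smul_one,
          map_smul, map_one, hΘ1, hme]
    | grade1 g =>
        cases g with
        | x =>
          show Θ (τmB (xg q)) = τm (Θ (xg q))
          rw [hτmBx, hΘz, hΘx, map_mul, map_add, hτmX, hmXi, hme]
          simp only [mTinv, mXx, mxX, mYy, myY, mTT q t ht, mTX q t ht, mTx q t ht,
            mTY q t ht, mTy q t ht, mYX q t hq ht, mYiX q t ht, mYx q t ht,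
            myx q t hq ht, mTe q t ht ht2, me, mul_assoc, smul_mul_assoc, mul_smul_comm,
            smul_smul, smul_add, smul_sub, add_mul, sub_mul, mul_add, mul_sub,
            mul_one, one_mul]
          match_scalars
          all_goals (try ring)
          all_goals (try (field_simp [httn, h1t2]; ring))
          all_goals ((try ring_nf); field_simp [httn, h1t2, hA, hB, hC, hD]; try ring)
        | y =>
          show Θ (τmB (yg q)) = τm (Θ (yg q))
          rw [hτmBy, hΘy, map_mul, map_add, hτmY, hmYi, hme]
        | z =>
          show Θ (τmB (zg q)) = τm (Θ (zg q))
          rw [hτmBz, hq2]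
          simp only [map_sub, map_smul, map_mul, map_add, hΘx, hΘy, hΘz, hτmX, hτmY,
            hmXi, hmYi, hmTinv, hme]
          simp only [mTinv, mXx, mxX, mYy, myY, mTT q t ht, mTX q t ht, mTx q t ht,
            mTY q t ht, mTy q t ht, mYX q t hq ht, mYiX q t ht, mYx q t ht,
            myx q t hq ht, mTe q t ht ht2, me, mul_assoc, smul_mul_assoc, mul_smul_comm,
            smul_smul, smul_add, smul_sub, add_mul, sub_mul, mul_add, mul_sub,
            mul_one, one_mul]
          match_scalars
          all_goals (try ring)
          all_goals (try (field_simp [httn, h1t2]; ring))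
          all_goals ((try ring_nf); field_simp [httn, h1t2, hA, hB, hC, hD]; try ring)
    | mul a b ha hb => simp only [map_mul, ha, hb]
    | add a b ha hb => simp only [map_add, ha, hb]
  exact ⟨hpe, hme, fun h => ⟨τp h, by rw [map_mul, map_mul, hpe]⟩,
    fun h => ⟨τm h, by rw [map_mul, map_mul, hme]⟩, keyp, keym⟩
end
end

section
/- There exists a unique ℂ-bilinear form ⟨−,−⟩ : ℂ[X^{±1}] × ℂ[X^{±1}] → ℂ such that ⟨1, 1⟩ = 1 and ⟨π(φ(h))(u), v⟩ = ⟨u, π(h)(v)⟩ for all h ∈ H_{q,t} and all u, v ∈ ℂ[X^{±1}] (the Dunkl–Cherednik pairing on the polynomial representation). -/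
noncomputable section

open LaurentPolynomial in
set_option maxHeartbeats 2000000 in
/-- **Dunkl–Cherednik pairing**: there is a unique ℂ-bilinear form `⟨-,-⟩` on the polynomial
representation `ℂ[X^{±1}]` of `H_{q,t}` with `⟨1,1⟩ = 1` and
`⟨π(φ(h))u, v⟩ = ⟨u, π(h)v⟩` for all `h ∈ H_{q,t}`, where `π` is the polynomial
representation (`π X = x̂`, `π T = T̂`, `π Y = Ŷ = ŷ∘ŝ∘T̂`) and `φ` is the anti-automorphism
with `φ(X) = Y⁻¹`, `φ(Y) = X⁻¹`, `φ(T) = T`. -/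
theorem dunkl_cherednik_pairing (q t : ℂ) (hq : q ≠ 0) (ht : t ≠ 0)
    (xh sh yh Th : Module.End ℂ (LaurentPolynomial ℂ))
    (hx : ∀ f, xh f = T 1 * f)
    (hs : ∀ n : ℤ, sh (T n) = T (-n))
    (hy : ∀ n : ℤ, yh (T n) = q ^ (-2 * n) • T n)
    (hT : ∀ f, (T 2 - 1) * Th f = t • ((T 2 - 1) * sh f) + (t - t⁻¹) • (sh f - f))
    (π : DAHA q t →ₐ[ℂ] Module.End ℂ (LaurentPolynomial ℂ))
    (hπX : π (Xg q t) = xh) (hπT : π (Tg q t) = Th) (hπY : π (Yg q t) = yh * sh * Th)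
    (φ : DAHA q t →ₗ[ℂ] DAHA q t)
    (hφbij : Function.Bijective φ) (hφ1 : φ 1 = 1)
    (hφmul : ∀ a b : DAHA q t, φ (a * b) = φ b * φ a)
    (hφX : φ (Xg q t) = Yig q t) (hφY : φ (Yg q t) = Xig q t) (hφT : φ (Tg q t) = Tg q t) :
    ∃! B : LaurentPolynomial ℂ →ₗ[ℂ] LaurentPolynomial ℂ →ₗ[ℂ] ℂ,
      B 1 1 = 1 ∧
      ∀ (h : DAHA q t) (u v : LaurentPolynomial ℂ),
        B (π (φ h) u) v = B u (π h v) := by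
  classical
  have ht' : t⁻¹ ≠ 0 := inv_ne_zero ht
  -- ### Relations in the DAHA
  have r1 : Xg q t * Xig q t = 1 := by
    have h := RingQuot.mkAlgHom_rel ℂ (DahaRel.XXi (q := q) (t := t))
    rw [map_mul, map_one] at h; exact h
  have r2 : Xig q t * Xg q t = 1 := by
    have h := RingQuot.mkAlgHom_rel ℂ (DahaRel.XiX (q := q) (t := t))
    rw [map_mul, map_one] at h; exact h
  have r3 : Yg q t * Yig q t = 1 := by
    have h := RingQuot.mkAlgHom_rel ℂ (DahaRel.YYi (q := q) (t := t))
    rw [map_mul, map_one] at h; exact h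
  have r4 : Yig q t * Yg q t = 1 := by
    have h := RingQuot.mkAlgHom_rel ℂ (DahaRel.YiY (q := q) (t := t))
    rw [map_mul, map_one] at h; exact h
  have r5 : Tg q t * Xg q t * Tg q t = Xig q t := by
    have h := RingQuot.mkAlgHom_rel ℂ (DahaRel.TXT (q := q) (t := t))
    rw [map_mul, map_mul] at h; exact h
  have r6 : Tg q t * Yig q t * Tg q t = Yg q t := by
    have h := RingQuot.mkAlgHom_rel ℂ (DahaRel.TYiT (q := q) (t := t))
    rw [map_mul, map_mul] at h; exact h
  have r7 : Xg q t * Yg q t = q ^ 2 • (Yg q t * Xg q t * Tg q t * Tg q t) := by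
    have h := RingQuot.mkAlgHom_rel ℂ (DahaRel.XY (q := q) (t := t))
    rw [map_mul, map_smul, map_mul, map_mul, map_mul] at h; exact h
  have r8 : (Tg q t - t • 1) * (Tg q t + t⁻¹ • 1) = 0 := by
    have h := RingQuot.mkAlgHom_rel ℂ (DahaRel.hecke (q := q) (t := t))
    rw [map_mul, map_sub, map_add, map_zero, AlgHom.commutes, AlgHom.commutes,
      Algebra.algebraMap_eq_smul_one, Algebra.algebraMap_eq_smul_one] at h
    exact h
  have hT2 : Tg q t * Tg q t = (t - t⁻¹) • Tg q t + 1 := by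
    have h2 : Tg q t * Tg q t - ((t - t⁻¹) • Tg q t + 1) = 0 := by
      rw [← r8]
      simp only [sub_mul, mul_add, smul_mul_assoc, mul_smul_comm, one_mul, mul_one,
        smul_smul, smul_sub, sub_smul, mul_inv_cancel₀ ht, inv_mul_cancel₀ ht, one_smul]
      module
    exact sub_eq_zero.mp h2
  have hTTi : Tg q t * (Tg q t - (t - t⁻¹) • 1) = 1 := by
    rw [mul_sub, hT2, mul_smul_comm, mul_one, add_sub_cancel_left]
  have hTiT : (Tg q t - (t - t⁻¹) • 1) * Tg q t = 1 := by
    rw [sub_mul, hT2, smul_mul_assoc, one_mul, add_sub_cancel_left]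
  have d1 : Tg q t * Xg q t = Xig q t * Tg q t - (t - t⁻¹) • Xig q t := by
    have e1 : Tg q t * Xg q t * Tg q t * (Tg q t - (t - t⁻¹) • 1) = Tg q t * Xg q t := by
      rw [mul_assoc (Tg q t * Xg q t), hTTi, mul_one]
    rw [r5] at e1
    rw [← e1, mul_sub, mul_smul_comm, mul_one]
  have d2 : Tg q t * Xig q t = Xg q t * Tg q t + (t - t⁻¹) • Xig q t := by
    have e1 : Tg q t * Xig q t = Tg q t * Tg q t * Xg q t * Tg q t := by
      rw [← r5]; noncomm_ring
    rw [e1, hT2, add_mul, add_mul, smul_mul_assoc, smul_mul_assoc, one_mul, r5, add_comm]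
  have d3 : Yig q t * Xg q t = q ^ 2 • (Xg q t * Tg q t * Tg q t * Yig q t) := by
    calc Yig q t * Xg q t = Yig q t * Xg q t * (Yg q t * Yig q t) := by rw [r3, mul_one]
      _ = Yig q t * (Xg q t * Yg q t) * Yig q t := by noncomm_ring
      _ = Yig q t * (q ^ 2 • (Yg q t * Xg q t * Tg q t * Tg q t)) * Yig q t := by rw [r7]
      _ = q ^ 2 • (Yig q t * Yg q t * (Xg q t * Tg q t * Tg q t * Yig q t)) := by
          simp only [mul_smul_comm, smul_mul_assoc, mul_assoc]
      _ = q ^ 2 • (Xg q t * Tg q t * Tg q t * Yig q t) := by rw [r4, one_mul]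
  have e2 : Yig q t = q ^ 2 • (Xg q t * (Tg q t * (Tg q t * (Yig q t * Xig q t)))) := by
    calc Yig q t = Yig q t * Xg q t * Xig q t := by rw [mul_assoc, r1, mul_one]
      _ = (q ^ 2 • (Xg q t * Tg q t * Tg q t * Yig q t)) * Xig q t := by rw [d3]
      _ = q ^ 2 • (Xg q t * (Tg q t * (Tg q t * (Yig q t * Xig q t)))) := by
          simp only [smul_mul_assoc, mul_assoc]
  have d4 : Yig q t * Xig q t
      = (q ^ 2)⁻¹ • ((Tg q t - (t - t⁻¹) • 1) * ((Tg q t - (t - t⁻¹) • 1)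
          * (Xig q t * Yig q t))) := by
    have e3 : (Tg q t - (t - t⁻¹) • 1) * ((Tg q t - (t - t⁻¹) • 1) * (Xig q t * Yig q t))
        = q ^ 2 • (Yig q t * Xig q t) := by
      conv_lhs => rw [e2]
      rw [mul_smul_comm, mul_smul_comm, mul_smul_comm]
      rw [← mul_assoc (Xig q t) (Xg q t), r2, one_mul]
      rw [← mul_assoc (Tg q t - (t - t⁻¹) • 1) (Tg q t), hTiT, one_mul]
      rw [← mul_assoc (Tg q t - (t - t⁻¹) • 1) (Tg q t), hTiT, one_mul]
    rw [e3, smul_smul, inv_mul_cancel₀ (pow_ne_zero 2 hq), one_smul]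
  have hYim : Yig q t - t⁻¹ • 1 = (-t⁻¹) • (Yig q t * (Yg q t - t • 1)) := by
    rw [mul_sub, r4, mul_smul_comm, mul_one, smul_sub, smul_smul]
    have hsc : -t⁻¹ * t = -1 := by field_simp
    rw [hsc, neg_smul, neg_smul, one_smul, sub_neg_eq_add]
    abel
  -- ### evaluation functionals
  have hsingle : ∀ (n : ℤ) (a : ℂ), (AddMonoidAlgebra.single n a : LaurentPolynomial ℂ) = a • T n := by
    intro n a
    show _ = a • (AddMonoidAlgebra.single n (1 : ℂ))
    rw [AddMonoidAlgebra.smul_single, smul_eq_mul, mul_one]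
  let εm : ℂ → (LaurentPolynomial ℂ →ₗ[ℂ] ℂ) := fun z =>
    Finsupp.lsum ℂ (fun n : ℤ => LinearMap.toSpanSingleton ℂ ℂ (z ^ n)) ∘ₗ
      (AddMonoidAlgebra.coeffLinearEquiv ℂ).toLinearMap
  have hεm : ∀ (z : ℂ) (n : ℤ) (a : ℂ), εm z (AddMonoidAlgebra.single n a) = a * z ^ n := by
    intro z n a
    show (Finsupp.lsum ℂ (fun n : ℤ => LinearMap.toSpanSingleton ℂ ℂ (z ^ n))) (Finsupp.single n a) = _
    erw [Finsupp.lsum_single]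
    rw [LinearMap.toSpanSingleton_apply, smul_eq_mul]
  have hεT : ∀ (z : ℂ) (n : ℤ), εm z (T n) = z ^ n := by
    intro z n
    have h := hεm z n 1
    rw [one_mul] at h
    have h2 : (AddMonoidAlgebra.single n (1:ℂ) : LaurentPolynomial ℂ) = T n := rfl
    rw [h2] at h
    exact h
  have hεone : ∀ z : ℂ, εm z 1 = 1 := by
    intro z
    have := hεT z 0
    rw [T_zero, zpow_zero] at this
    exact this
  have hεmul : ∀ (z : ℂ), z ≠ 0 → ∀ (n : ℤ) (f : LaurentPolynomial ℂ),
      εm z (T n * f) = z ^ n * εm z f := by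
    intro z hz n f
    induction f using AddMonoidAlgebra.induction with
    | zero => simp
    | single_add m a f _ _ ih =>
      rw [mul_add, map_add, map_add, mul_add, ih]
      congr 1
      rw [hsingle, mul_smul_comm, ← T_add, map_smul, map_smul, hεT, hεT, smul_eq_mul,
        smul_eq_mul, zpow_add₀ hz]
      ring
  have hεs : ∀ f, εm t⁻¹ (sh f) = εm t f := by
    intro f
    induction f using AddMonoidAlgebra.induction with
    | zero => simp
    | single_add m a f _ _ ih =>
      rw [map_add, map_add, map_add, ih]
      congr 1
      rw [hsingle]
      rw [map_smul, map_smul, hs, map_smul, hεT, hεT]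
      simp [smul_eq_mul, zpow_neg, inv_zpow]
  -- T 2 - 1 is a non zero divisor
  have hT2ne : (T 2 - 1 : LaurentPolynomial ℂ) ≠ 0 := by
    rw [sub_ne_zero]
    intro h
    have h2 : (T 2 : LaurentPolynomial ℂ) = T 0 := by rw [h, T_zero]
    have h3 : (2 : ℤ) = 0 := (AddMonoidAlgebra.single_left_inj (one_ne_zero (α := ℂ))).mp h2
    norm_num at h3
  have hsh1 : sh (1 : LaurentPolynomial ℂ) = 1 := by
    have := hs 0
    rw [T_zero, neg_zero, T_zero] at this
    exact this
  have hTh1 : Th (1 : LaurentPolynomial ℂ) = t • 1 := by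
    have h := hT 1
    rw [hsh1, sub_self, smul_zero, add_zero, mul_one] at h
    have h2 : (T 2 - 1 : LaurentPolynomial ℂ) * Th 1 = (T 2 - 1) * (t • 1) := by
      rw [h, mul_smul_comm, mul_one]
    exact mul_left_cancel₀ hT2ne h2
  have hεTh : ∀ f, εm t⁻¹ (Th f) = t * εm t⁻¹ f := by
    intro f
    by_cases ht2 : t ^ 2 = 1
    · have hti : t⁻¹ = t := inv_eq_of_mul_eq_one_right (by rw [← pow_two]; exact ht2)
      have h := hT f
      rw [hti, sub_self, zero_smul, add_zero] at h
      have h2 : (T 2 - 1 : LaurentPolynomial ℂ) * Th f = (T 2 - 1) * (t • sh f) := by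
        rw [h, mul_smul_comm]
      have h3 : Th f = t • sh f := mul_left_cancel₀ hT2ne h2
      rw [h3, map_smul, smul_eq_mul, hεs]
      rw [hti]
    · have h := congrArg (εm t⁻¹) (hT f)
      simp only [sub_mul, one_mul, map_add, map_smul, map_sub, smul_eq_mul] at h
      rw [hεmul t⁻¹ ht' 2, hεmul t⁻¹ ht' 2, hεs] at h
      set A := εm t⁻¹ (Th f) with hA
      set S := εm t f with hS
      set E := εm t⁻¹ f with hE
      have hz2 : (t⁻¹ : ℂ) ^ (2:ℤ) = (t^2)⁻¹ := by
        rw [show ((2:ℤ)) = ((2:ℕ) : ℤ) from rfl, zpow_natCast, inv_pow]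
      rw [hz2] at h
      have hfac : (1 - t^2) * (A - t * E) = 0 := by
        field_simp at h
        have h6 : ((1 - t^2) * (A - t*E)) * t^3 = 0 := by linear_combination t^3 * h
        exact (mul_eq_zero.mp h6).resolve_right (pow_ne_zero 3 ht)
      have h1t2 : (1 : ℂ) - t^2 ≠ 0 := sub_ne_zero.mpr (fun hh => ht2 hh.symm)
      have h7 := (mul_eq_zero.mp hfac).resolve_left h1t2
      exact sub_eq_zero.mp h7
  -- ### operators on Laurent polynomials
  have hxhm : xh = LinearMap.mulLeft ℂ (T 1) := by
    apply LinearMap.ext; intro f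
    rw [hx f, LinearMap.mulLeft_apply]
  have hπXi : π (Xig q t) = LinearMap.mulLeft ℂ (T (-1)) := by
    have h1 : π (Xig q t) * π (Xg q t) = 1 := by rw [← map_mul, r2, map_one]
    have h2 : π (Xg q t) * LinearMap.mulLeft ℂ (T (-1)) = 1 := by
      rw [hπX, hxhm, Module.End.mul_eq_comp, ← LinearMap.mulLeft_mul, ← T_add,
        show (1:ℤ) + -1 = 0 by ring, T_zero, LinearMap.mulLeft_one]
      rfl
    calc π (Xig q t) = π (Xig q t) * 1 := (mul_one _).symm
      _ = π (Xig q t) * (π (Xg q t) * LinearMap.mulLeft ℂ (T (-1))) := by rw [h2]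
      _ = (π (Xig q t) * π (Xg q t)) * LinearMap.mulLeft ℂ (T (-1)) := by rw [mul_assoc]
      _ = LinearMap.mulLeft ℂ (T (-1)) := by rw [h1, one_mul]
  have hyh1 : yh (1 : LaurentPolynomial ℂ) = 1 := by
    have h := hy 0
    rw [T_zero] at h
    simpa using h
  have hπY1 : π (Yg q t) 1 = t • 1 := by
    rw [hπY, Module.End.mul_apply, Module.End.mul_apply, hTh1, map_smul, hsh1, map_smul, hyh1]
  have hπYi1 : π (Yig q t) 1 = t⁻¹ • 1 := by
    have h : π (Yig q t) (π (Yg q t) 1) = 1 := by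
      rw [← Module.End.mul_apply, ← map_mul, r4, map_one π, Module.End.one_apply]
    rw [hπY1, map_smul] at h
    have h2 := congrArg (fun w => t⁻¹ • w) h
    simp only [smul_smul, inv_mul_cancel₀ ht, one_smul] at h2
    exact h2
  -- ### the section σ of the polynomial representation
  let uX : (DAHA q t)ˣ := ⟨Xg q t, Xig q t, r1, r2⟩
  let pX : ℤ → DAHA q t := fun n => ((uX ^ n : (DAHA q t)ˣ) : DAHA q t)
  have hpX0 : pX 0 = 1 := by
    show ((uX ^ (0:ℤ) : (DAHA q t)ˣ) : DAHA q t) = 1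
    rw [zpow_zero]; rfl
  have hpXsucc : ∀ n : ℤ, pX (n + 1) = pX n * Xg q t := by
    intro n
    show ((uX ^ (n+1) : (DAHA q t)ˣ) : DAHA q t) = _
    rw [zpow_add_one, Units.val_mul]
  have hpXsucc' : ∀ n : ℤ, pX (n + 1) = Xg q t * pX n := by
    intro n
    show ((uX ^ (n+1) : (DAHA q t)ˣ) : DAHA q t) = _
    rw [show n + 1 = 1 + n by ring, zpow_add, zpow_one, Units.val_mul]
  have hpXpred : ∀ n : ℤ, pX (n - 1) = pX n * Xig q t := by
    intro n
    show ((uX ^ (n-1) : (DAHA q t)ˣ) : DAHA q t) = _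
    rw [zpow_sub_one, Units.val_mul]
    rfl
  have hpXpred' : ∀ n : ℤ, pX (n - 1) = Xig q t * pX n := by
    intro n
    show ((uX ^ (n-1) : (DAHA q t)ˣ) : DAHA q t) = _
    rw [show n - 1 = -1 + n by ring, zpow_add, zpow_neg_one, Units.val_mul]
    rfl
  have hπpX : ∀ n : ℤ, π (pX n) = LinearMap.mulLeft ℂ (T n) := by
    intro n
    induction n using Int.induction_on with
    | zero =>
      rw [hpX0, map_one, T_zero, LinearMap.mulLeft_one]
      rfl
    | succ n ih =>
      rw [hpXsucc, map_mul, ih, hπX, hxhm, Module.End.mul_eq_comp, ← LinearMap.mulLeft_mul,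
        ← T_add]
    | pred n ih =>
      rw [hpXpred, map_mul, ih, hπXi, Module.End.mul_eq_comp, ← LinearMap.mulLeft_mul, ← T_add,
        show -(n:ℤ) + -1 = -(n:ℤ) - 1 by ring]
  let σ : LaurentPolynomial ℂ →ₗ[ℂ] DAHA q t :=
    Finsupp.lsum ℂ (fun n : ℤ => LinearMap.toSpanSingleton ℂ (DAHA q t) (pX n)) ∘ₗ
      (AddMonoidAlgebra.coeffLinearEquiv ℂ).toLinearMap
  have hσs : ∀ (n : ℤ) (a : ℂ), σ (AddMonoidAlgebra.single n a) = a • pX n := by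
    intro n a
    show (Finsupp.lsum ℂ (fun n : ℤ => LinearMap.toSpanSingleton ℂ (DAHA q t) (pX n)))
      (Finsupp.single n a) = _
    erw [Finsupp.lsum_single]
    rw [LinearMap.toSpanSingleton_apply]
  have hσT : ∀ n : ℤ, σ (T n) = pX n := by
    intro n
    have h := hσs n 1
    rw [one_smul] at h
    exact h
  have hσ1 : σ 1 = 1 := by
    have h := hσT 0
    rw [T_zero, hpX0] at h
    exact h
  have hπσ : ∀ f, π (σ f) 1 = f := by
    intro f
    induction f using AddMonoidAlgebra.induction with
    | zero => rw [map_zero, map_zero, LinearMap.zero_apply]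
    | single_add n a f _ _ ih =>
      rw [map_add, map_add, LinearMap.add_apply, ih, hσs, map_smul, LinearMap.smul_apply,
        hπpX, LinearMap.mulLeft_apply, mul_one, hsingle]
  have hσX : ∀ f, Xg q t * σ f = σ (T 1 * f) := by
    intro f
    induction f using AddMonoidAlgebra.induction with
    | zero => rw [map_zero, mul_zero, mul_zero, map_zero]
    | single_add n a f _ _ ih =>
      rw [map_add, mul_add, mul_add, map_add, ih, hσs, mul_smul_comm, ← hpXsucc',
        hsingle, mul_smul_comm, ← T_add, map_smul, hσT, show (1:ℤ) + n = n + 1 by ring]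
  have hσXr : ∀ f, σ f * Xg q t = σ (T 1 * f) := by
    intro f
    induction f using AddMonoidAlgebra.induction with
    | zero => rw [map_zero, zero_mul, mul_zero, map_zero]
    | single_add n a f _ _ ih =>
      rw [map_add, add_mul, mul_add, map_add, ih, hσs, smul_mul_assoc, ← hpXsucc,
        hsingle, mul_smul_comm, ← T_add, map_smul, hσT, show (1:ℤ) + n = n + 1 by ring]
  have hσXi : ∀ f, Xig q t * σ f = σ (T (-1) * f) := by
    intro f
    induction f using AddMonoidAlgebra.induction with
    | zero => rw [map_zero, mul_zero, mul_zero, map_zero]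
    | single_add n a f _ _ ih =>
      rw [map_add, mul_add, mul_add, map_add, ih, hσs, mul_smul_comm, ← hpXpred',
        hsingle, mul_smul_comm, ← T_add, map_smul, hσT, show (-1:ℤ) + n = n - 1 by ring]
  have hσXir : ∀ f, σ f * Xig q t = σ (T (-1) * f) := by
    intro f
    induction f using AddMonoidAlgebra.induction with
    | zero => rw [map_zero, zero_mul, mul_zero, map_zero]
    | single_add n a f _ _ ih =>
      rw [map_add, add_mul, mul_add, map_add, ih, hσs, smul_mul_assoc, ← hpXpred,
        hsingle, mul_smul_comm, ← T_add, map_smul, hσT, show (-1:ℤ) + n = n - 1 by ring]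
  -- ### the left ideal I = H(Y-t) + H(T-t) and W = I + range σ
  let cY : DAHA q t := Yg q t - t • 1
  let cT : DAHA q t := Tg q t - t • 1
  let Isub : Submodule ℂ (DAHA q t) :=
    LinearMap.range (LinearMap.mulRight ℂ cY) ⊔ LinearMap.range (LinearMap.mulRight ℂ cT)
  let W : Submodule ℂ (DAHA q t) := Isub ⊔ LinearMap.range σ
  have hIW : Isub ≤ W := le_sup_left
  have hcYW : ∀ a : DAHA q t, a * cY ∈ W := fun a => hIW (Submodule.mem_sup_left ⟨a, rfl⟩)
  have hcTW : ∀ a : DAHA q t, a * cT ∈ W := fun a => hIW (Submodule.mem_sup_right ⟨a, rfl⟩)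
  have hσW : ∀ f, σ f ∈ W := fun f => Submodule.mem_sup_right ⟨f, rfl⟩
  have h1W : (1 : DAHA q t) ∈ W := hσ1 ▸ hσW 1
  have hIl : ∀ (g : DAHA q t), ∀ i ∈ Isub, g * i ∈ Isub := by
    intro g i hi
    rcases Submodule.mem_sup.mp hi with ⟨x, hx, y, hy, rfl⟩
    rcases hx with ⟨a, rfl⟩
    rcases hy with ⟨b, rfl⟩
    rw [LinearMap.mulRight_apply, LinearMap.mulRight_apply, mul_add, ← mul_assoc, ← mul_assoc]
    exact Submodule.add_mem _ (Submodule.mem_sup_left ⟨g * a, rfl⟩)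
      (Submodule.mem_sup_right ⟨g * b, rfl⟩)
  have hmemW : ∀ w : DAHA q t, w ∈ W → ∃ i ∈ Isub, ∃ f, w = i + σ f := by
    intro w hw
    rcases Submodule.mem_sup.mp hw with ⟨i, hi, s, hs, rfl⟩
    rcases hs with ⟨f, rfl⟩
    exact ⟨i, hi, f, rfl⟩
  have hXclo : ∀ w ∈ W, Xg q t * w ∈ W := by
    intro w hw
    rcases hmemW w hw with ⟨i, hi, f, rfl⟩
    rw [mul_add, hσX]
    exact Submodule.add_mem _ (hIW (hIl _ i hi)) (hσW _)
  have hXiclo : ∀ w ∈ W, Xig q t * w ∈ W := by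
    intro w hw
    rcases hmemW w hw with ⟨i, hi, f, rfl⟩
    rw [mul_add, hσXi]
    exact Submodule.add_mem _ (hIW (hIl _ i hi)) (hσW _)
  have hσTgW : ∀ f, σ f * Tg q t ∈ W := by
    intro f
    have h : σ f * Tg q t = σ f * cT + t • σ f := by
      show _ = σ f * (Tg q t - t • 1) + t • σ f
      rw [mul_sub, mul_smul_comm, mul_one, sub_add_cancel]
    rw [h]
    exact Submodule.add_mem _ (hcTW _) (Submodule.smul_mem _ _ (hσW f))
  have hQ : ∀ n : ℤ, ∃ f1 f2, Tg q t * pX n = σ f1 + σ f2 * Tg q t := by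
    intro n
    induction n using Int.induction_on with
    | zero =>
      refine ⟨0, AddMonoidAlgebra.single 0 1, ?_⟩
      rw [hpX0, mul_one, map_zero, zero_add, hσs, one_smul, hpX0, one_mul]
    | succ n ih =>
      obtain ⟨f1, f2, hf⟩ := ih
      refine ⟨T 1 * f1 - (t - t⁻¹) • (T (-1) * f2), T (-1) * f2, ?_⟩
      rw [hpXsucc, ← mul_assoc, hf, add_mul, hσXr, mul_assoc, d1, mul_sub, ← mul_assoc,
        hσXir, mul_smul_comm, hσXir, map_sub, map_smul]
      abel
    | pred n ih =>
      obtain ⟨f1, f2, hf⟩ := ih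
      refine ⟨T (-1) * f1 + (t - t⁻¹) • (T (-1) * f2), T 1 * f2, ?_⟩
      rw [hpXpred, ← mul_assoc, hf, add_mul, hσXir, mul_assoc, d2, mul_add, ← mul_assoc,
        hσXr, mul_smul_comm, hσXir, map_add, map_smul]
      abel
  have hTσW : ∀ f, Tg q t * σ f ∈ W := by
    intro f
    induction f using AddMonoidAlgebra.induction with
    | zero => rw [map_zero, mul_zero]; exact Submodule.zero_mem _
    | single_add n a f _ _ ih =>
      rw [map_add, mul_add]
      refine Submodule.add_mem _ ?_ ih
      rw [hσs, mul_smul_comm]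
      refine Submodule.smul_mem _ a ?_
      obtain ⟨f1, f2, hf⟩ := hQ n
      rw [hf]
      exact Submodule.add_mem _ (hσW f1) (hσTgW f2)
  have hTclo : ∀ w ∈ W, Tg q t * w ∈ W := by
    intro w hw
    rcases hmemW w hw with ⟨i, hi, f, rfl⟩
    rw [mul_add]
    exact Submodule.add_mem _ (hIW (hIl _ i hi)) (hTσW f)
  have hTiclo : ∀ w ∈ W, (Tg q t - (t - t⁻¹) • 1) * w ∈ W := by
    intro w hw
    rw [sub_mul, smul_mul_assoc, one_mul]
    exact Submodule.sub_mem _ (hTclo w hw) (Submodule.smul_mem _ _ hw)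
  have hYiW : ∀ n : ℤ, Yig q t * pX n ∈ W := by
    intro n
    induction n using Int.induction_on with
    | zero =>
      rw [hpX0, mul_one]
      have h : Yig q t = (-t⁻¹) • (Yig q t * cY) + t⁻¹ • 1 := by
        show Yig q t = (-t⁻¹) • (Yig q t * (Yg q t - t • 1)) + t⁻¹ • 1
        rw [← hYim, sub_add_cancel]
      rw [h]
      exact Submodule.add_mem _ (Submodule.smul_mem _ _ (hcYW _))
        (Submodule.smul_mem _ _ h1W)
    | succ n ih =>
      rw [hpXsucc', ← mul_assoc, d3, smul_mul_assoc]
      refine Submodule.smul_mem _ _ ?_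
      simp only [mul_assoc]
      exact hXclo _ (hTclo _ (hTclo _ ih))
    | pred n ih =>
      rw [hpXpred', ← mul_assoc, d4, smul_mul_assoc]
      refine Submodule.smul_mem _ _ ?_
      simp only [mul_assoc]
      exact hTiclo _ (hTiclo _ (hXiclo _ ih))
  have hYiσW : ∀ f, Yig q t * σ f ∈ W := by
    intro f
    induction f using AddMonoidAlgebra.induction with
    | zero => rw [map_zero, mul_zero]; exact Submodule.zero_mem _
    | single_add n a f _ _ ih =>
      rw [map_add, mul_add]
      refine Submodule.add_mem _ ?_ ih
      rw [hσs, mul_smul_comm]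
      exact Submodule.smul_mem _ a (hYiW n)
  have hYiclo : ∀ w ∈ W, Yig q t * w ∈ W := by
    intro w hw
    rcases hmemW w hw with ⟨i, hi, f, rfl⟩
    rw [mul_add]
    exact Submodule.add_mem _ (hIW (hIl _ i hi)) (hYiσW f)
  have hYclo : ∀ w ∈ W, Yg q t * w ∈ W := by
    intro w hw
    rw [← r6, mul_assoc, mul_assoc]
    exact hTclo _ (hYiclo _ (hTclo _ hw))
  have hmulW : ∀ (wfa : FreeAlgebra ℂ DGen), ∀ w ∈ W,
      (RingQuot.mkAlgHom ℂ (DahaRel q t) wfa) * w ∈ W := by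
    intro wfa
    induction wfa using FreeAlgebra.induction with
    | grade0 r =>
      intro w hw
      rw [AlgHom.commutes, ← Algebra.smul_def]
      exact Submodule.smul_mem _ r hw
    | grade1 x =>
      cases x with
      | X => exact hXclo
      | Xi => exact hXiclo
      | Y => exact hYclo
      | Yi => exact hYiclo
      | T => exact hTclo
    | mul a b iha ihb =>
      intro w hw
      rw [map_mul, mul_assoc]
      exact iha _ (ihb _ hw)
    | add a b iha ihb =>
      intro w hw
      rw [map_add, add_mul]
      exact Submodule.add_mem _ (iha w hw) (ihb w hw)
  have hfull : ∀ h : DAHA q t, h ∈ W := by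
    intro h
    obtain ⟨w, rfl⟩ := RingQuot.mkAlgHom_surjective ℂ (DahaRel q t) h
    have h2 := hmulW w 1 h1W
    rwa [mul_one] at h2
  -- ### π kills Isub at 1
  have hcY1 : π cY (1 : LaurentPolynomial ℂ) = 0 := by
    show π (Yg q t - t • 1) 1 = 0
    rw [map_sub, map_smul, map_one π, LinearMap.sub_apply, LinearMap.smul_apply,
      Module.End.one_apply, hπY1, sub_self]
  have hcT1 : π cT (1 : LaurentPolynomial ℂ) = 0 := by
    show π (Tg q t - t • 1) 1 = 0
    rw [map_sub, map_smul, map_one π, LinearMap.sub_apply, LinearMap.smul_apply,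
      Module.End.one_apply, hπT, hTh1, sub_self]
  have hπI : ∀ i ∈ Isub, π i (1 : LaurentPolynomial ℂ) = 0 := by
    intro i hi
    rcases Submodule.mem_sup.mp hi with ⟨x, hx, y, hy, rfl⟩
    rcases hx with ⟨a, rfl⟩
    rcases hy with ⟨b, rfl⟩
    rw [LinearMap.mulRight_apply, LinearMap.mulRight_apply, map_add, LinearMap.add_apply,
      map_mul, map_mul, Module.End.mul_apply, Module.End.mul_apply, hcY1, hcT1,
      map_zero, map_zero, add_zero]
  -- ### φ⁻¹ facts
  have hφXi : φ (Xig q t) = Yg q t := by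
    have h1 : φ (Xig q t) * Yig q t = 1 := by
      rw [← hφX, ← hφmul, r1, hφ1]
    calc φ (Xig q t) = φ (Xig q t) * (Yig q t * Yg q t) := by rw [r4, mul_one]
      _ = (φ (Xig q t) * Yig q t) * Yg q t := by rw [mul_assoc]
      _ = Yg q t := by rw [h1, one_mul]
  let e : DAHA q t ≃ₗ[ℂ] DAHA q t := LinearEquiv.ofBijective φ hφbij
  have hesymm : ∀ x, φ (e.symm x) = x := fun x => e.apply_symm_apply x
  have hesymmul : ∀ a b : DAHA q t, e.symm (a * b) = e.symm b * e.symm a := by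
    intro a b
    apply hφbij.1
    rw [hφmul, hesymm, hesymm, hesymm]
  have hes1 : e.symm (1 : DAHA q t) = 1 := by
    apply hφbij.1
    rw [hesymm, hφ1]
  have hesY : e.symm (Yg q t) = Xig q t := by
    apply hφbij.1
    rw [hesymm, hφXi]
  have hesT : e.symm (Tg q t) = Tg q t := by
    apply hφbij.1
    rw [hesymm, hφT]
  -- ### ε kills the two adjoint operators
  have hεXi' : ∀ w, εm t⁻¹ (π (Xig q t - t • 1) w) = 0 := by
    intro w
    rw [map_sub, map_smul, LinearMap.sub_apply, LinearMap.smul_apply, map_sub, map_smul,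
      hπXi, LinearMap.mulLeft_apply, hεmul t⁻¹ ht' (-1), map_one π, Module.End.one_apply,
      smul_eq_mul, show (t⁻¹:ℂ) ^ (-1:ℤ) = t by simp, sub_self]
  have hεT' : ∀ w, εm t⁻¹ (π (Tg q t - t • 1) w) = 0 := by
    intro w
    rw [map_sub, map_smul, LinearMap.sub_apply, LinearMap.smul_apply, map_sub, map_smul,
      hπT, hεTh, map_one π, Module.End.one_apply, smul_eq_mul, sub_self]
  -- ### the key vanishing lemma
  have key0 : ∀ d : DAHA q t, π (φ d) 1 = 0 → ∀ v, εm t⁻¹ (π d v) = 0 := by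
    intro d hd v
    rcases hmemW (φ d) (hfull (φ d)) with ⟨i, hi, f, hif⟩
    have hf0 : f = 0 := by
      have h := hd
      rw [hif, map_add, LinearMap.add_apply, hπI i hi, hπσ, zero_add] at h
      exact h
    rw [hf0, map_zero, add_zero] at hif
    rcases Submodule.mem_sup.mp hi with ⟨x, hx, y, hy, hxy⟩
    rcases hx with ⟨a, rfl⟩
    rcases hy with ⟨b, rfl⟩
    have hd2 : d = (Xig q t - t • 1) * e.symm a + (Tg q t - t • 1) * e.symm b := by
      have h1 : d = e.symm (φ d) := by
        apply hφbij.1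
        rw [hesymm]
      rw [h1, hif, ← hxy, LinearMap.mulRight_apply, LinearMap.mulRight_apply, map_add,
        hesymmul, hesymmul]
      have hcY' : e.symm cY = Xig q t - t • 1 := by
        show e.symm (Yg q t - t • 1) = _
        rw [map_sub, map_smul, hesY, hes1]
      have hcT' : e.symm cT = Tg q t - t • 1 := by
        show e.symm (Tg q t - t • 1) = _
        rw [map_sub, map_smul, hesT, hes1]
      rw [hcY', hcT']
    rw [hd2, map_add, LinearMap.add_apply, map_add, map_mul, map_mul, Module.End.mul_apply,
      Module.End.mul_apply, hεXi', hεT', add_zero]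
  -- ### the pairing B
  let θ : LaurentPolynomial ℂ →ₗ[ℂ] DAHA q t := (e.symm : DAHA q t ≃ₗ[ℂ] DAHA q t).toLinearMap ∘ₗ σ
  have hθ : ∀ u, θ u = e.symm (σ u) := fun u => rfl
  have hφθ : ∀ u, φ (θ u) = σ u := fun u => hesymm (σ u)
  have hrep : ∀ u, π (φ (θ u)) 1 = u := by
    intro u
    rw [hφθ, hπσ]
  have hθ1 : θ (1 : LaurentPolynomial ℂ) = 1 := by
    rw [hθ, hσ1, hes1]
  let B : LaurentPolynomial ℂ →ₗ[ℂ] LaurentPolynomial ℂ →ₗ[ℂ] ℂ :=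
    LinearMap.mk₂ ℂ (fun u v => εm t⁻¹ (π (θ u) v))
      (fun m₁ m₂ n => by rw [map_add, map_add, LinearMap.add_apply, map_add])
      (fun c m n => by rw [map_smul, map_smul, LinearMap.smul_apply, map_smul])
      (fun m n₁ n₂ => by rw [map_add, map_add])
      (fun c m n => by rw [map_smul, map_smul])
  have hBapp : ∀ u v, B u v = εm t⁻¹ (π (θ u) v) := fun u v => rfl
  have hB11 : B 1 1 = 1 := by
    rw [hBapp, hθ1, map_one π, Module.End.one_apply, hεone]
  have hBadj : ∀ (h : DAHA q t) (u v : LaurentPolynomial ℂ),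
      B (π (φ h) u) v = B u (π h v) := by
    intro h u v
    have hd : π (φ (θ (π (φ h) u) - θ u * h)) 1 = 0 := by
      rw [map_sub, hφθ, hφmul, hφθ, map_sub, LinearMap.sub_apply, hπσ, map_mul,
        Module.End.mul_apply, hπσ, sub_self]
    have h0 := key0 _ hd v
    rw [map_sub, LinearMap.sub_apply, map_sub, sub_eq_zero] at h0
    rw [hBapp, hBapp, h0, map_mul, Module.End.mul_apply]
  refine ⟨B, ⟨hB11, hBadj⟩, ?_⟩
  rintro B' ⟨hB'11, hB'adj⟩
  have hB'T : ∀ n : ℤ, B' 1 (T n) = (t⁻¹ : ℂ) ^ n := by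
    intro n
    induction n using Int.induction_on with
    | zero => rw [T_zero, hB'11, zpow_zero]
    | succ n ih =>
      have h := hB'adj (Xg q t) 1 (T n)
      rw [hφX, hπYi1, map_smul, LinearMap.smul_apply, hπX, hx, ← T_add,
        show (1:ℤ) + n = n + 1 by ring] at h
      rw [← h, ih, smul_eq_mul, zpow_add_one₀ ht']
      ring
    | pred n ih =>
      have h := hB'adj (Xig q t) 1 (T (-n))
      rw [hφXi, hπY1, map_smul, LinearMap.smul_apply, hπXi, LinearMap.mulLeft_apply,
        ← T_add, show (-1:ℤ) + -n = -n - 1 by ring] at h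
      rw [← h, ih, smul_eq_mul, zpow_sub_one₀ ht', inv_inv]
      ring
  have hB'1 : ∀ v, B' 1 v = εm t⁻¹ v := by
    intro v
    induction v using AddMonoidAlgebra.induction with
    | zero => rw [map_zero, map_zero]
    | single_add n a f _ _ ih =>
      rw [map_add, map_add, ih, hsingle, map_smul, map_smul, hB'T, hεT]
  apply LinearMap.ext
  intro u
  apply LinearMap.ext
  intro v
  have h1 : B' u v = B' (π (φ (θ u)) 1) v := by rw [hrep]
  rw [h1, hB'adj (θ u) 1 v, hB'1]
  exact (hBapp u v).symm
end
end
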